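/- arXiv:2304.08791 — 8 statements merged into one kernel-verified Lean document; each statement's English description precedes it below -/
import Mathlib

section
/- The weight γ(c ε_0) = (nc/(n+1)) ε_0 − (c/(n+1)) Σ_{i=1}^n ε_i is singular and sl_{n+1}-integral if and only if c ∈ {−1, −2, …, −n}. -/
/-- The weight `γ(c ε_0) = (nc/(n+1)) ε_0 - (c/(n+1)) Σ_{i=1}^n ε_i` is singular
(its dot stabilizer under `S_{n+1}` is non-trivial) and `sl_{n+1}`-integral (consecutive
coefficient differences are integers) iff `c ∈ {-1, -2, …, -n}`. -/
theorem statement2 (n : ℕ) (hn : 2 ≤ n) (c : ℂ) :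
    ((∀ i : Fin n, ∃ m : ℤ,
        (if (i.castSucc : Fin (n + 1)) = 0 then (n : ℂ) * c / (n + 1) else -c / (n + 1))
          - (if (i.succ : Fin (n + 1)) = 0 then (n : ℂ) * c / (n + 1) else -c / (n + 1))
          = (m : ℂ)) ∧
      ∃ w : Equiv.Perm (Fin (n + 1)), w ≠ 1 ∧
        ∀ k : Fin (n + 1),
          (if (w⁻¹ k : Fin (n + 1)) = 0 then (n : ℂ) * c / (n + 1) else -c / (n + 1))
              + ((n : ℂ) - 2 * ((w⁻¹ k : Fin (n + 1)) : ℕ)) / 2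
              - ((n : ℂ) - 2 * (k : ℕ)) / 2
            = (if k = 0 then (n : ℂ) * c / (n + 1) else -c / (n + 1)))
      ↔ ∃ m : ℕ, 1 ≤ m ∧ m ≤ n ∧ c = -(m : ℂ) := by
  have hn1 : ((n : ℂ) + 1) ≠ 0 := by
    have := Nat.cast_add_one_ne_zero (R := ℂ) n
    push_cast at this
    exact this
  constructor
  · rintro ⟨-, w, hw, hsing⟩
    obtain ⟨x, hx⟩ : ∃ x, w x ≠ x := by
      by_contra h
      push_neg at h
      exact hw (Equiv.ext h)
    set k := w x with hkdef
    have hk : w⁻¹ k ≠ k := by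
      rw [hkdef, show w⁻¹ (w x) = x from w.symm_apply_apply x]
      exact fun h => hx h.symm
    have H := hsing k
    by_cases hj0 : w⁻¹ k = 0
    · have hk0 : k ≠ 0 := fun h => hk (hj0.trans h.symm)
      rw [if_pos hj0, if_neg hk0, hj0] at H
      simp only [Fin.val_zero, Nat.cast_zero] at H
      refine ⟨(k : ℕ), ?_, ?_, ?_⟩
      · have : (k : ℕ) ≠ 0 := fun h => hk0 (Fin.ext h)
        omega
      · have := k.isLt; omega
      · have h2 : (c + ((k : ℕ) : ℂ)) * (4 * ((n : ℂ) + 1) ^ 2) = 0 := by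
          field_simp at H
          linear_combination (2 * ((n : ℂ) + 1)) * H
        rcases mul_eq_zero.mp h2 with h3 | h3
        · linear_combination h3
        · exact absurd h3 (mul_ne_zero (by norm_num) (pow_ne_zero 2 hn1))
    · by_cases hk0 : k = 0
      · rw [if_neg hj0, if_pos hk0] at H
        have hkv : (((k : Fin (n+1)) : ℕ) : ℂ) = 0 := by rw [hk0]; simp
        rw [hkv] at H
        refine ⟨((w⁻¹ k : Fin (n+1)) : ℕ), ?_, ?_, ?_⟩
        · have : ((w⁻¹ k : Fin (n+1)) : ℕ) ≠ 0 := fun h => hj0 (Fin.ext h)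
          omega
        · have := (w⁻¹ k).isLt; omega
        · obtain ⟨jv, hjv⟩ : ∃ jv : ℂ, ((((w⁻¹ k : Fin (n+1)) : ℕ)) : ℂ) = jv := ⟨_, rfl⟩
          rw [hjv] at H ⊢
          have h2 : (c + jv) * (4 * ((n : ℂ) + 1) ^ 2) = 0 := by
            field_simp at H
            linear_combination (-2 * ((n : ℂ) + 1)) * H
          rcases mul_eq_zero.mp h2 with h3 | h3
          · linear_combination h3
          · exact absurd h3 (mul_ne_zero (by norm_num) (pow_ne_zero 2 hn1))
      · exfalso
        rw [if_neg hj0, if_neg hk0] at H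
        have : (((w⁻¹ k : Fin (n+1)) : ℕ) : ℂ) = ((k : ℕ) : ℂ) := by
          linear_combination -H
        exact hk (Fin.ext (Nat.cast_injective this))
  · rintro ⟨m, hm1, hmn, rfl⟩
    constructor
    · intro i
      have hsucc : (i.succ : Fin (n + 1)) ≠ 0 := Fin.succ_ne_zero i
      rw [if_neg hsucc]
      by_cases h0 : (i.castSucc : Fin (n + 1)) = 0
      · refine ⟨-(m : ℤ), ?_⟩
        rw [if_pos h0]
        push_cast
        field_simp
        ring
      · refine ⟨0, ?_⟩
        rw [if_neg h0]
        push_cast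
        ring
    · have hmlt : m < n + 1 := by omega
      set a : Fin (n + 1) := ⟨m, hmlt⟩ with ha_def
      have ha : a ≠ 0 := by
        simp only [ha_def, Ne, Fin.ext_iff, Fin.val_zero]
        omega
      refine ⟨Equiv.swap 0 a, ?_, ?_⟩
      · rw [Ne, Equiv.swap_eq_one_iff]
        exact fun h => ha h.symm
      · intro k
        rw [Equiv.swap_inv]
        by_cases hk0 : k = 0
        · subst hk0
          rw [Equiv.swap_apply_left, if_neg ha, if_pos rfl]
          simp only [ha_def, Fin.val_zero, Nat.cast_zero]
          field_simp
          ring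
        · by_cases hka : k = a
          · subst hka
            rw [Equiv.swap_apply_right, if_pos rfl, if_neg hk0]
            simp only [ha_def, Fin.val_zero, Nat.cast_zero]
            field_simp
            ring
          · rw [Equiv.swap_apply_of_ne_of_ne hk0 hka]
            ring
end

section
/- Let M be an sl_{n+1}-module and v ∈ M a vector satisfying e_{0i} v = v for i = 1,…,n. Then for each i and each m ≥ 0 one has (e_{0i}−1)^{m} h_i^{m} v = k_m v for some nonzero scalar k_m ∈ ℂ (in fact k_m = (−1)^m m!), and (e_{0i}−1)^{s} h_i^{m} v = 0 for all s > m, where h_i = e_{ii} − (1/(n+1)) Σ_{k=0}^n e_{kk} regarded as an element of sl_{n+1}. -/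
open Matrix

attribute [local instance 100] LieRing.ofAssociativeRing

lemma aux_pow_comm {R : Type*} [Ring R] (a h : R) (hc : a * h = h * a + a + 1) :
    ∀ s : ℕ, a ^ (s + 1) * h = h * a ^ (s + 1) + (s + 1) • a ^ (s + 1) + (s + 1) • a ^ s := by
  intro s
  induction s with
  | zero => simpa using hc
  | succ t ih =>
      have h2 : a ^ (t + 2) * h = a * (a ^ (t + 1) * h) := by
        rw [← mul_assoc, ← pow_succ']
      have h3 : a * a ^ (t + 1) = a ^ (t + 2) := (pow_succ' a (t + 1)).symm
      have h4 : a * a ^ t = a ^ (t + 1) := (pow_succ' a t).symm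
      have h5 : t + 1 + 1 = t + 2 := rfl
      rw [h5, h2, ih, mul_add, mul_add, ← mul_assoc a h, hc, add_mul, add_mul,
        mul_assoc h a, h3, mul_smul_comm, mul_smul_comm, h3, h4]
      simp only [succ_nsmul, one_mul]
      abel


/-- Let `M` be a module for `sl_{n+1}` (realized inside `gl_{n+1}`), and let
`v ∈ M` satisfy `e_{0i} v = v` for `i = 1,…,n`.  Then for each `i` and `m ≥ 0`,
`(e_{0i} - 1)^m h_i^m v = k_m v` for some nonzero scalar `k_m ∈ ℂ`, and
`(e_{0i} - 1)^s h_i^m v = 0` for all `s > m`, where `h_i = e_{ii} - (1/(n+1)) Σ_k e_{kk}`. -/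
theorem statement4 (n : ℕ) (M : Type*) [AddCommGroup M] [Module ℂ M]
    [LieRingModule (Matrix (Fin (n + 1)) (Fin (n + 1)) ℂ) M]
    [LieModule ℂ (Matrix (Fin (n + 1)) (Fin (n + 1)) ℂ) M]
    (v : M)
    (hv : ∀ j : Fin n, ⁅(single 0 j.succ 1 : Matrix (Fin (n + 1)) (Fin (n + 1)) ℂ), v⁆ = v)
    (i : Fin n) (m : ℕ) :
    (∃ k : ℂ, k ≠ 0 ∧
      ((LieModule.toEnd ℂ (Matrix (Fin (n + 1)) (Fin (n + 1)) ℂ) M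
            (single 0 i.succ 1) - 1) ^ m *
        (LieModule.toEnd ℂ (Matrix (Fin (n + 1)) (Fin (n + 1)) ℂ) M
            (single i.succ i.succ 1 - ((n : ℂ) + 1)⁻¹ • 1)) ^ m) v = k • v) ∧
    ∀ s : ℕ, m < s →
      ((LieModule.toEnd ℂ (Matrix (Fin (n + 1)) (Fin (n + 1)) ℂ) M
            (single 0 i.succ 1) - 1) ^ s *
        (LieModule.toEnd ℂ (Matrix (Fin (n + 1)) (Fin (n + 1)) ℂ) M
            (single i.succ i.succ 1 - ((n : ℂ) + 1)⁻¹ • 1)) ^ m) v = 0 := by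
  set e : Matrix (Fin (n + 1)) (Fin (n + 1)) ℂ := single 0 i.succ 1 with he
  set hm : Matrix (Fin (n + 1)) (Fin (n + 1)) ℂ :=
    single i.succ i.succ 1 - ((n : ℂ) + 1)⁻¹ • 1 with hhm
  set E : Module.End ℂ M := LieModule.toEnd ℂ (Matrix (Fin (n + 1)) (Fin (n + 1)) ℂ) M e with hE
  set H : Module.End ℂ M :=
    LieModule.toEnd ℂ (Matrix (Fin (n + 1)) (Fin (n + 1)) ℂ) M hm with hH
  set A : Module.End ℂ M := E - 1 with hA
  -- matrix bracket
  have hbr : ⁅hm, e⁆ = -e := by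
    rw [Ring.lie_def, hhm, he]
    simp only [sub_mul, mul_sub, smul_mul_assoc, mul_smul_comm, one_mul, mul_one,
      single_mul_single_same]
    rw [single_mul_single_of_ne (c := (1:ℂ)) i.succ i.succ 0 (Fin.succ_ne_zero i) 1]
    abel
  -- bracket in End
  have hEnd : H * E - E * H = -E := by
    have h1 := LieHom.map_lie (LieModule.toEnd ℂ (Matrix (Fin (n + 1)) (Fin (n + 1)) ℂ) M) hm e
    rw [hbr, map_neg] at h1
    rw [← Ring.lie_def, hH, hE]
    exact h1.symm
  have hAH : A * H = H * A + A + 1 := by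
    have hEH : E * H = H * E + E := by
      linear_combination (norm := noncomm_ring) -hEnd
    rw [hA, sub_mul, mul_sub, mul_one, one_mul, hEH]
    noncomm_ring
  have hAv : A v = 0 := by
    have h1 : E v = v := by
      rw [hE, LieModule.toEnd_apply_apply]
      exact hv i
    rw [hA, LinearMap.sub_apply, Module.End.one_apply, h1, sub_self]
  have hApow : ∀ u : ℕ, (A ^ (u + 1)) v = 0 := by
    intro u
    rw [pow_succ, Module.End.mul_apply, hAv, map_zero]
  have key : ∀ s : ℕ, A ^ (s + 1) * H = H * A ^ (s + 1) + (s + 1) • A ^ (s + 1) + (s + 1) • A ^ s :=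
    aux_pow_comm A H hAH
  -- main induction
  have main : ∀ m : ℕ, (∀ s : ℕ, m < s → (A ^ s * H ^ m) v = 0) ∧
      (A ^ m * H ^ m) v = ((m.factorial : ℂ)) • v := by
    intro m
    induction m with
    | zero =>
        constructor
        · intro s hs
          obtain ⟨t, rfl⟩ := Nat.exists_eq_add_of_lt hs
          simp only [zero_add]
          rw [pow_zero, mul_one]
          exact hApow t
        · simp
    | succ m ih =>
        have step : ∀ s : ℕ, (A ^ (s + 1) * H ^ (m + 1)) v =
            H ((A ^ (s + 1) * H ^ m) v) + (s + 1) • ((A ^ (s + 1) * H ^ m) v)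
              + (s + 1) • ((A ^ s * H ^ m) v) := by
          intro s
          have h6 : A ^ (s + 1) * H ^ (m + 1) = (A ^ (s + 1) * H) * H ^ m := by
            rw [mul_assoc, ← pow_succ']
          rw [h6, key s, add_mul, add_mul, smul_mul_assoc, smul_mul_assoc, mul_assoc]
          simp only [LinearMap.add_apply, LinearMap.smul_apply, Module.End.mul_apply]
        constructor
        · intro s hs
          obtain ⟨t, rfl⟩ := Nat.exists_eq_add_of_lt hs
          have e1 : m + 1 + t + 1 = (m + t + 1) + 1 := by omega
          rw [e1, step (m + t + 1), ih.1 (m + t + 1 + 1) (by omega), ih.1 (m + t + 1) (by omega)]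
          simp
        · rw [step m, ih.1 (m + 1) (by omega), ih.2]
          simp only [map_zero, smul_zero, zero_add, add_zero]
          rw [← Nat.cast_smul_eq_nsmul ℂ, smul_smul]
          congr 1
          push_cast [Nat.factorial_succ]
          ring
  refine ⟨⟨(m.factorial : ℂ), ?_, (main m).2⟩, (main m).1⟩
  exact_mod_cast m.factorial_ne_zero
end

section
/- Let M be an sl_{n+1}-module on which each e_{0i}−1 (i=1,…,n) acts locally nilpotently and such that the Whittaker subspace wh(M) = {v ∈ M : e_{0i} v = v for all i} is finite-dimensional. Then M is a free module over the polynomial algebra U(h_n) = ℂ[h_1,…,h_n], and M ≅ U(h_n) ⊗ wh(M) as vector spaces. -/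
open Matrix

attribute [local instance 100] LieRing.ofAssociativeRing

open MvPolynomial

noncomputable section

variable {n : ℕ} {V : Type*} [AddCommGroup V] [Module ℂ V]

/-- The algebra hom from the polynomial ring to `End V` determined by a commuting family. -/
def Phi (T : Fin n → Module.End ℂ V) (hT : ∀ i j, Commute (T i) (T j)) :
    MvPolynomial (Fin n) ℂ →ₐ[ℂ] Module.End ℂ V := by
  letI : CommRing (Algebra.adjoin ℂ (Set.range T)) :=
    Algebra.adjoinCommRingOfComm ℂ (by
      rintro a ⟨i, rfl⟩ b ⟨j, rfl⟩; exact (hT i j).eq)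
  exact (Algebra.adjoin ℂ (Set.range T)).val.comp
    (MvPolynomial.aeval (fun i => ⟨T i, Algebra.subset_adjoin (Set.mem_range_self i)⟩))

@[simp] theorem Phi_X (T : Fin n → Module.End ℂ V) (hT : ∀ i j, Commute (T i) (T j)) (i : Fin n) :
    Phi T hT (X i) = T i := by
  simp [Phi]

theorem Phi_monomial_one (T : Fin n → Module.End ℂ V) (hT : ∀ i j, Commute (T i) (T j))
    (m : Fin n → ℕ) :
    Phi T hT (monomial (Finsupp.equivFunOnFinite.symm m) 1) =
      (List.ofFn fun i => T i ^ m i).prod := by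
  have h1 : (monomial (Finsupp.equivFunOnFinite.symm m) (1 : ℂ)) =
      (List.ofFn fun i => (X i : MvPolynomial (Fin n) ℂ) ^ m i).prod := by
    rw [List.prod_ofFn, monomial_eq, Finsupp.prod_pow]
    simp [Finsupp.equivFunOnFinite]
    rfl
  rw [h1, _root_.map_list_prod]
  congr 1
  simp only [List.map_ofFn]
  congr 1
  ext i
  simp

end

noncomputable section FiniteDifference

variable {n : ℕ}

/-- The substitution `X j ↦ X j + δ_{ij}`. -/
def shft (i : Fin n) : MvPolynomial (Fin n) ℂ →ₐ[ℂ] MvPolynomial (Fin n) ℂ :=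
  aeval (fun j => X j + if j = i then 1 else 0)

@[simp] theorem shft_X (i j : Fin n) :
    shft i (X j) = X j + if j = i then 1 else 0 := by simp [shft]

/-- The finite-difference operator in the `i`-th variable. -/
def dlt (i : Fin n) : Module.End ℂ (MvPolynomial (Fin n) ℂ) :=
  (shft i).toLinearMap - 1

theorem dlt_apply (i : Fin n) (p : MvPolynomial (Fin n) ℂ) :
    dlt i p = shft i p - p := rfl

theorem shft_comm (i j : Fin n) : (shft i).comp (shft j) = (shft j).comp (shft i) := by
  apply MvPolynomial.algHom_ext
  intro k
  simp only [AlgHom.comp_apply, shft_X, _root_.map_add, shft_X]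
  split_ifs <;> simp <;> ring

theorem dlt_commute (i j : Fin n) : Commute (dlt i) (dlt j) := by
  have h : Commute ((shft i).toLinearMap : Module.End ℂ (MvPolynomial (Fin n) ℂ))
      (shft j).toLinearMap := by
    show _ * _ = _ * _
    rw [Module.End.mul_eq_comp, Module.End.mul_eq_comp]
    apply LinearMap.ext; intro p
    have := congrArg (fun f => f p) (congrArg AlgHom.toLinearMap (shft_comm i j))
    simpa using this
  exact (h.sub_left (Commute.one_left _)).sub_right
    ((Commute.one_right _).sub_left (Commute.one_left _))

theorem shft_monomial_fix {i : Fin n} {d : Fin n →₀ ℕ} (h : d i = 0) (c : ℂ) :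
    shft i (monomial d c) = monomial d c := by
  rw [shft, aeval_monomial, monomial_eq]
  congr 1
  apply Finsupp.prod_congr
  intro j hj
  have hji : j ≠ i := by
    rintro rfl
    exact (Finsupp.mem_support_iff.mp hj) h
  simp [hji]

theorem monomial_decomp (i : Fin n) (d : Fin n →₀ ℕ) (c : ℂ) :
    monomial d c = monomial (d.erase i) c * X i ^ (d i) := by
  rw [X_pow_eq_monomial, monomial_mul, mul_one, Finsupp.erase_add_single]

theorem shft_monomial (i : Fin n) (d : Fin n →₀ ℕ) (c : ℂ) :
    shft i (monomial d c) = monomial (d.erase i) c * (X i + 1) ^ (d i) := by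
  conv_lhs => rw [monomial_decomp i d c]
  rw [_root_.map_mul, _root_.map_pow, shft_monomial_fix (by simp) c]
  simp

theorem dlt_monomial (i : Fin n) (d : Fin n →₀ ℕ) (c : ℂ) :
    dlt i (monomial d c) = ∑ j ∈ Finset.range (d i),
      monomial (d.erase i + Finsupp.single i j) (((d i).choose j : ℂ) * c) := by
  rw [dlt_apply, shft_monomial]
  conv_lhs => rw [monomial_decomp i d c]
  rw [← mul_sub]
  have hbin : ((X i + 1 : MvPolynomial (Fin n) ℂ) ^ (d i)) - X i ^ (d i) =
      ∑ j ∈ Finset.range (d i), ((d i).choose j : ℂ) • X i ^ j := by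
    rw [add_pow, Finset.sum_range_succ]
    simp only [Nat.choose_self, Nat.cast_one, one_pow, mul_one, one_smul]
    rw [add_sub_cancel_right]
    apply Finset.sum_congr rfl
    intro j hj
    rw [Algebra.smul_def]
    simp [algebraMap_eq, mul_comm]
  rw [hbin, Finset.mul_sum]
  apply Finset.sum_congr rfl
  intro j hj
  rw [Algebra.smul_def, algebraMap_eq]
  rw [show monomial (d.erase i) c * (C ((d i).choose j : ℂ) * X i ^ j)
      = C ((d i).choose j : ℂ) * (monomial (d.erase i) c * X i ^ j) by ring]
  rw [X_pow_eq_monomial, monomial_mul, mul_one, C_mul_monomial]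

end FiniteDifference

noncomputable section DiffLemmas

variable {n : ℕ}

theorem dlt_pow_monomial_zero (i : Fin n) :
    ∀ b a : ℕ, b < a → ∀ (d : Fin n →₀ ℕ) (c : ℂ), d i = b →
      ((dlt i ^ a) (monomial d c)) = 0 := by
  intro b
  induction b using Nat.strong_induction_on with
  | _ b IH =>
    intro a hab d c hd
    obtain ⟨a', rfl⟩ : ∃ a', a = a' + 1 := ⟨a - 1, by omega⟩
    rw [pow_succ, Module.End.mul_apply, dlt_monomial, _root_.map_sum]
    apply Finset.sum_eq_zero
    intro j hj
    rw [hd] at hj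
    have hjb : j < b := Finset.mem_range.mp hj
    exact IH j hjb a' (by omega) _ _ (by simp)

theorem dlt_pow_monomial_self (i : Fin n) :
    ∀ b : ℕ, ∀ (d : Fin n →₀ ℕ) (c : ℂ), d i = b →
      ((dlt i ^ b) (monomial d c)) = monomial (d.erase i) ((b.factorial : ℂ) * c) := by
  intro b
  induction b with
  | zero =>
    intro d c hd
    rw [pow_zero, Module.End.one_apply, Finsupp.erase_of_notMem_support (by
      simp [Finsupp.mem_support_iff, hd])]
    simp
  | succ b IH =>
    intro d c hd
    rw [pow_succ, Module.End.mul_apply, dlt_monomial, _root_.map_sum, hd, Finset.sum_range_succ]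
    have hkill : ∀ j ∈ Finset.range b,
        (dlt i ^ b) (monomial (d.erase i + Finsupp.single i j) (((b+1).choose j : ℂ) * c)) = 0 := by
      intro j hj
      exact dlt_pow_monomial_zero i j b (Finset.mem_range.mp hj) _ _ (by simp)
    rw [Finset.sum_eq_zero hkill, zero_add,
      IH _ _ (by simp)]
    have herase : (d.erase i + Finsupp.single i b).erase i = d.erase i := by
      rw [Finsupp.erase_add, Finsupp.erase_single, add_zero, Finsupp.erase_idem]
    rw [herase]
    congr 1
    rw [Nat.choose_succ_self_right]
    push_cast [Nat.factorial_succ]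
    ring

/-- The difference-operator evaluation. -/
def Dop : MvPolynomial (Fin n) ℂ →ₐ[ℂ] Module.End ℂ (MvPolynomial (Fin n) ℂ) :=
  Phi dlt dlt_commute

theorem Dop_monomial_single (i : Fin n) (a : ℕ) :
    (Dop (monomial (Finsupp.single i a) (1:ℂ))) = dlt i ^ a := by
  rw [← X_pow_eq_monomial, _root_.map_pow, Dop, Phi_X]

theorem Dop_kill {k d : Fin n →₀ ℕ} {i : Fin n} (h : d i < k i) (c : ℂ) :
    Dop (monomial k 1) (monomial d c) = 0 := by
  have hk : monomial k (1:ℂ) = monomial (k.erase i) 1 * monomial (Finsupp.single i (k i)) 1 := by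
    rw [monomial_mul, mul_one, Finsupp.erase_add_single]
  rw [hk, _root_.map_mul, Module.End.mul_apply, Dop_monomial_single,
    dlt_pow_monomial_zero i (d i) (k i) h d c rfl, _root_.map_zero]

theorem Dop_diag : ∀ (d : Fin n →₀ ℕ) (c : ℂ),
    Dop (monomial d 1) (monomial d c) = C ((d.prod fun _ a => (a.factorial : ℂ)) * c) := by
  intro d
  induction d using Finsupp.induction with
  | zero =>
    intro c
    simp only [Finsupp.prod_zero_index, one_mul]
    rw [show (monomial (0 : Fin n →₀ ℕ) (1:ℂ)) = 1 from rfl, _root_.map_one, Module.End.one_apply, C_apply]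
  | single_add a b f ha hb IH =>
    intro c
    have hfa : f a = 0 := Finsupp.notMem_support_iff.mp ha
    have hsplit : monomial (Finsupp.single a b + f) (1:ℂ)
        = monomial f 1 * monomial (Finsupp.single a b) 1 := by
      rw [monomial_mul, mul_one, add_comm]
    rw [hsplit, _root_.map_mul, Module.End.mul_apply, Dop_monomial_single]
    have hcoord : (Finsupp.single a b + f) a = b := by simp [hfa]
    rw [dlt_pow_monomial_self a b _ c hcoord]
    have herase : (Finsupp.single a b + f).erase a = f := by
      rw [Finsupp.erase_add, Finsupp.erase_single, zero_add,
        Finsupp.erase_of_notMem_support ha]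
    rw [herase, IH]
    have hprod : ((Finsupp.single a b + f).prod fun _ a => (a.factorial : ℂ))
        = (b.factorial : ℂ) * (f.prod fun _ a => (a.factorial : ℂ)) := by
      rw [Finsupp.prod_add_index_of_disjoint, Finsupp.prod_single_index (by simp)]
      · rw [Finsupp.support_single_ne_zero a hb]
        simpa using ha
    rw [hprod]
    ring_nf

end DiffLemmas

noncomputable section Abstract

variable {n : ℕ} {V : Type*} [AddCommGroup V] [Module ℂ V]

theorem comm1 (H E : Fin n → Module.End ℂ V) (hHH : ∀ i j, Commute (H i) (H j))
    (hEH : ∀ i j, E i * H j = H j * E i + (if i = j then E i else 0)) (i : Fin n)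
    (p : MvPolynomial (Fin n) ℂ) :
    E i * Phi H hHH p = Phi H hHH (shft i p) * E i := by
  induction p using MvPolynomial.induction_on with
  | C a =>
    have h1 : shft i (C a : MvPolynomial (Fin n) ℂ) = C a := by simp [shft]
    rw [h1, ← MvPolynomial.algebraMap_eq, AlgHom.commutes]
    exact (Algebra.commutes a (E i)).symm
  | add p q hp hq =>
    simp only [_root_.map_add, mul_add, add_mul, hp, hq]
  | mul_X p j hp =>
    rw [_root_.map_mul, _root_.map_mul, Phi_X, ← mul_assoc, hp, _root_.map_mul, shft_X, _root_.map_add, Phi_X]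
    by_cases hij : j = i
    · rw [if_pos hij, _root_.map_one, mul_assoc, hEH i j, if_pos hij.symm]
      noncomm_ring
    · rw [if_neg hij, _root_.map_zero, add_zero, mul_assoc, hEH i j,
        if_neg (fun h => hij h.symm), add_zero, ← mul_assoc]
end Abstract

noncomputable section Abstract2

variable {n : ℕ} {V : Type*} [AddCommGroup V] [Module ℂ V]

/-- The Whittaker subspace. -/
def Wsp (E : Fin n → Module.End ℂ V) : Submodule ℂ V :=
  ⨅ i, Module.End.eigenspace (E i) 1

theorem mem_Wsp {E : Fin n → Module.End ℂ V} {w : V} :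
    w ∈ Wsp E ↔ ∀ i, E i w = w := by
  simp [Wsp, Submodule.mem_iInf, Module.End.mem_eigenspace_iff]

theorem hXX (E : Fin n → Module.End ℂ V) (hEE : ∀ i j, Commute (E i) (E j)) :
    ∀ i j, Commute (E i - 1) (E j - 1) := fun i j =>
  (((hEE i j).sub_right (Commute.one_right _))).sub_left
    ((Commute.one_left _).sub_right (Commute.one_right _))

theorem keyBase (H E : Fin n → Module.End ℂ V) (hHH : ∀ i j, Commute (H i) (H j))
    (hEH : ∀ i j, E i * H j = H j * E i + (if i = j then E i else 0)) (i : Fin n)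
    (p : MvPolynomial (Fin n) ℂ) {w : V} (hw : E i w = w) :
    (E i - 1) (Phi H hHH p w) = Phi H hHH (dlt i p) w := by
  have h := congrArg (fun f => f w) (comm1 H E hHH hEH i p)
  simp only [Module.End.mul_apply] at h
  rw [LinearMap.sub_apply, Module.End.one_apply, h, hw, dlt_apply, _root_.map_sub]
  rfl

theorem key (H E : Fin n → Module.End ℂ V) (hHH : ∀ i j, Commute (H i) (H j))
    (hEE : ∀ i j, Commute (E i) (E j))
    (hEH : ∀ i j, E i * H j = H j * E i + (if i = j then E i else 0))
    (q p : MvPolynomial (Fin n) ℂ) {w : V} (hw : ∀ i, E i w = w) :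
    Phi (fun i => E i - 1) (hXX E hEE) q (Phi H hHH p w) = Phi H hHH (Dop q p) w := by
  induction q using MvPolynomial.induction_on generalizing p with
  | C a =>
    rw [← algebraMap_eq, AlgHom.commutes, AlgHom.commutes, Module.algebraMap_end_apply,
      Module.algebraMap_end_apply, _root_.map_smul, LinearMap.smul_apply]
  | add q r hq hr =>
    simp only [_root_.map_add, LinearMap.add_apply, hq, hr]
  | mul_X q i hq =>
    rw [_root_.map_mul, Phi_X, Module.End.mul_apply, keyBase H E hHH hEH i p (hw i), hq,
      show Dop (q * X i) = Dop q * dlt i by rw [_root_.map_mul, Dop, Phi_X],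
      Module.End.mul_apply]

end Abstract2

noncomputable section Abstract3

variable {n : ℕ} {V : Type*} [AddCommGroup V] [Module ℂ V]

theorem exists_lt_of_ne {k r : Fin n →₀ ℕ} (hne : k ≠ r) (hsum : ∑ i, k i ≤ ∑ i, r i) :
    ∃ i, k i < r i := by
  by_contra h
  push_neg at h
  have heq : ∀ i, k i = r i := by
    intro i
    by_contra hne2
    have hlt : r i < k i := lt_of_le_of_ne (h i) (fun he => hne2 he.symm)
    have := Finset.sum_lt_sum (fun j (_ : j ∈ Finset.univ) => h j)
      ⟨i, Finset.mem_univ i, hlt⟩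
    omega
  exact hne (Finsupp.ext heq)

theorem cst_ne_zero (m : Fin n →₀ ℕ) : (m.prod fun _ a => (a.factorial : ℂ)) ≠ 0 := by
  rw [Finsupp.prod]
  exact Finset.prod_ne_zero_iff.mpr fun i _ =>
    Nat.cast_ne_zero.mpr (Nat.factorial_ne_zero _)

theorem key_inj (H E : Fin n → Module.End ℂ V) (hHH : ∀ i j, Commute (H i) (H j))
    (hEE : ∀ i j, Commute (E i) (E j))
    (hEH : ∀ i j, E i * H j = H j * E i + (if i = j then E i else 0))
    {k : ℕ} {w : Fin k → V} (hwW : ∀ j, w j ∈ Wsp E)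
    (hwli : LinearIndependent ℂ w) (p : Fin k → MvPolynomial (Fin n) ℂ)
    (hsum : ∑ j, Phi H hHH (p j) (w j) = 0) : ∀ j, p j = 0 := by
  by_contra hne
  push_neg at hne
  obtain ⟨j0, hj0⟩ := hne
  set T : Finset (Fin n →₀ ℕ) := Finset.univ.biUnion (fun j => (p j).support) with hT
  have hTne : T.Nonempty := by
    obtain ⟨d, hd⟩ := (MvPolynomial.support_nonempty.mpr hj0)
    exact ⟨d, Finset.mem_biUnion.mpr ⟨j0, Finset.mem_univ _, hd⟩⟩
  obtain ⟨m, hmT, hmax⟩ := T.exists_max_image (fun d => ∑ i, d i) hTne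
  have h0 := congrArg (fun x => Phi (fun i => E i - 1) (hXX E hEE) (monomial m 1) x) hsum
  simp only [_root_.map_zero, _root_.map_sum] at h0
  have hterm : ∀ j, Phi (fun i => E i - 1) (hXX E hEE) (monomial m 1) (Phi H hHH (p j) (w j))
      = ((m.prod fun _ a => (a.factorial : ℂ)) * coeff m (p j)) • w j := by
    intro j
    rw [key H E hHH hEE hEH _ _ (fun i => mem_Wsp.mp (hwW j) i)]
    have hD : Dop (monomial m 1) (p j)
        = C ((m.prod fun _ a => (a.factorial : ℂ)) * coeff m (p j)) := by
      conv_lhs => rw [(p j).as_sum, _root_.map_sum]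
      rw [Finset.sum_eq_single m]
      · exact Dop_diag m _
      · intro d hd hdm
        have hdT : d ∈ T := Finset.mem_biUnion.mpr ⟨j, Finset.mem_univ _, hd⟩
        obtain ⟨i, hi⟩ := exists_lt_of_ne hdm (hmax d hdT)
        exact Dop_kill hi _
      · intro hm
        rw [MvPolynomial.notMem_support_iff.mp hm, _root_.map_zero, _root_.map_zero]
    rw [hD, ← algebraMap_eq, AlgHom.commutes, Module.algebraMap_end_apply]
  rw [Finset.sum_congr rfl (fun j _ => hterm j)] at h0
  have hco := linearIndependent_iff'.mp hwli Finset.univ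
    (fun j => (m.prod fun _ a => (a.factorial : ℂ)) * coeff m (p j)) h0
  obtain ⟨j1, _, hmj1⟩ := Finset.mem_biUnion.mp hmT
  have := hco j1 (Finset.mem_univ _)
  have hc0 : coeff m (p j1) = 0 := by
    rcases mul_eq_zero.mp this with h | h
    · exact absurd h (cst_ne_zero m)
    · exact h
  exact (MvPolynomial.mem_support_iff.mp hmj1) hc0

theorem indep (H E : Fin n → Module.End ℂ V) (hHH : ∀ i j, Commute (H i) (H j))
    (hEE : ∀ i j, Commute (E i) (E j))
    (hEH : ∀ i j, E i * H j = H j * E i + (if i = j then E i else 0))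
    {k : ℕ} {w : Fin k → V} (hwW : ∀ j, w j ∈ Wsp E)
    (hwli : LinearIndependent ℂ w) :
    LinearIndependent ℂ
      (fun x : (Fin n →₀ ℕ) × Fin k => Phi H hHH (monomial x.1 1) (w x.2)) := by
  rw [linearIndependent_iff']
  intro s g hsum x hxs
  set p : Fin k → MvPolynomial (Fin n) ℂ :=
    fun j => ∑ y ∈ s.filter (fun y => y.2 = j), monomial y.1 (g y) with hp
  have hps : ∑ j, Phi H hHH (p j) (w j) = 0 := by
    have h1 : ∀ j, Phi H hHH (p j) (w j)
        = ∑ y ∈ s.filter (fun y => y.2 = j), g y • Phi H hHH (monomial y.1 1) (w y.2) := by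
      intro j
      rw [hp, _root_.map_sum, LinearMap.sum_apply]
      apply Finset.sum_congr rfl
      intro y hy
      have hyj : y.2 = j := (Finset.mem_filter.mp hy).2
      rw [← hyj]
      rw [show monomial y.1 (g y) = g y • monomial y.1 (1:ℂ) by
        rw [smul_monomial, smul_eq_mul, mul_one], _root_.map_smul, LinearMap.smul_apply]
    rw [Finset.sum_congr rfl (fun j _ => h1 j),
      Finset.sum_fiberwise_of_maps_to (fun y _ => Finset.mem_univ y.2)]
    exact hsum
  have hp0 := key_inj H E hHH hEE hEH hwW hwli p hps
  have hgx : coeff x.1 (p x.2) = g x := by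
    rw [hp, MvPolynomial.coeff_sum]
    rw [Finset.sum_eq_single x]
    · rw [coeff_monomial, if_pos rfl]
    · intro y hy hyx
      have hyj : y.2 = x.2 := (Finset.mem_filter.mp hy).2
      rw [coeff_monomial, if_neg]
      intro h1
      exact hyx (Prod.ext h1 hyj)
    · intro hxmem
      exfalso
      apply hxmem
      exact Finset.mem_filter.mpr ⟨hxs, rfl⟩
  rw [← hgx, hp0 x.2, MvPolynomial.coeff_zero]

end Abstract3

noncomputable section Abstract4

variable {n : ℕ} {V : Type*} [AddCommGroup V] [Module ℂ V]

theorem exists_level (E : Fin n → Module.End ℂ V) (hEE : ∀ i j, Commute (E i) (E j))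
    (hnil : ∀ i (v : V), ∃ N, (((E i - 1) ^ N : Module.End ℂ V)) v = 0) (v : V) :
    ∃ N, ∀ d : Fin n →₀ ℕ, (∑ i, d i) = N →
      Phi (fun i => E i - 1) (hXX E hEE) (monomial d 1) v = 0 := by
  choose Nf hNf using fun i => hnil i v
  refine ⟨1 + ∑ i, Nf i, ?_⟩
  intro d hd
  have hex : ∃ i, Nf i ≤ d i := by
    by_contra h
    push_neg at h
    have : ∑ i, d i ≤ ∑ i, Nf i := Finset.sum_le_sum fun i _ => le_of_lt (h i)
    omega
  obtain ⟨i, hi⟩ := hex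
  have hsplit : monomial d (1:ℂ)
      = monomial (d.erase i + Finsupp.single i (d i - Nf i)) 1 * (X i) ^ (Nf i) := by
    rw [X_pow_eq_monomial, monomial_mul, mul_one]
    congr 1
    rw [add_assoc, ← Finsupp.single_add, Nat.sub_add_cancel hi, Finsupp.erase_add_single]
  rw [hsplit, _root_.map_mul, Module.End.mul_apply, _root_.map_pow, Phi_X, hNf i, _root_.map_zero]

theorem vanish_mem_span (H E : Fin n → Module.End ℂ V) (hHH : ∀ i j, Commute (H i) (H j))
    (hEE : ∀ i j, Commute (E i) (E j))
    (hEH : ∀ i j, E i * H j = H j * E i + (if i = j then E i else 0))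
    {k : ℕ} (b : Module.Basis (Fin k) ℂ (Wsp E)) :
    ∀ N (v : V), (∀ d : Fin n →₀ ℕ, (∑ i, d i) = N →
        Phi (fun i => E i - 1) (hXX E hEE) (monomial d 1) v = 0) →
      v ∈ Submodule.span ℂ (Set.range fun x : (Fin n →₀ ℕ) × Fin k =>
        Phi H hHH (monomial x.1 1) (b x.2 : V)) := by
  intro N
  induction N with
  | zero =>
    intro v hv
    have h0 := hv 0 (by simp)
    rw [show monomial (0 : Fin n →₀ ℕ) (1:ℂ) = 1 from rfl, _root_.map_one, Module.End.one_apply] at h0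
    rw [h0]
    exact Submodule.zero_mem _
  | succ N IH =>
    intro v hv
    classical
    set S : Finset (Fin n →₀ ℕ) := ((Fintype.piFinset fun _ : Fin n => Finset.range (N+1)).image
        Finsupp.equivFunOnFinite.symm).filter (fun d => ∑ i, d i = N) with hS
    have hmemS : ∀ d : Fin n →₀ ℕ, (∑ i, d i) = N → d ∈ S := by
      intro d hd
      refine Finset.mem_filter.mpr ⟨Finset.mem_image.mpr ⟨⇑d, ?_,
        Finsupp.equivFunOnFinite_symm_coe d⟩, hd⟩
      refine Fintype.mem_piFinset.mpr fun i => Finset.mem_range.mpr ?_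
      have : d i ≤ ∑ i', d i' :=
        Finset.single_le_sum (f := fun i => d i) (fun _ _ => Nat.zero_le _) (Finset.mem_univ i)
      omega
    have hWmem : ∀ d, (∑ i, d i) = N →
        Phi (fun i => E i - 1) (hXX E hEE) (monomial d 1) v ∈ Wsp E := by
      intro d hd
      rw [mem_Wsp]
      intro i
      have hXmono : (X i) * monomial d (1:ℂ) = monomial (d + Finsupp.single i 1) 1 := by
        rw [X, monomial_mul, one_mul, add_comm]
      have h1 : (E i - 1) (Phi (fun i => E i - 1) (hXX E hEE) (monomial d 1) v) = 0 := by
        rw [show (E i - 1) = Phi (fun i => E i - 1) (hXX E hEE) (X i) from (Phi_X (fun i => E i - 1) (hXX E hEE) i).symm,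
          ← Module.End.mul_apply, ← _root_.map_mul, hXmono]
        apply hv
        simp [Finsupp.add_apply, Finset.sum_add_distrib, hd, Finsupp.single_apply]
      rw [LinearMap.sub_apply, Module.End.one_apply] at h1
      exact sub_eq_zero.mp h1
    set wv : (Fin n →₀ ℕ) → V :=
      fun d => Phi (fun i => E i - 1) (hXX E hEE) (monomial d 1) v with hwv
    set a : (Fin n →₀ ℕ) → Fin k → ℂ := fun d j =>
      if hd : (∑ i, d i) = N then b.repr ⟨wv d, hWmem d hd⟩ j else 0 with ha
    set corr : V := ∑ d ∈ S, ∑ j, (a d j / (d.prod fun _ t => (t.factorial : ℂ))) •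
      Phi H hHH (monomial d 1) (b j : V) with hcorr
    have hbW : ∀ j i, E i (b j : V) = (b j : V) := fun j i => mem_Wsp.mp (b j).2 i
    have hmain : ∀ r : Fin n →₀ ℕ, (∑ i, r i) = N →
        Phi (fun i => E i - 1) (hXX E hEE) (monomial r 1) (v - corr) = 0 := by
      intro r hr
      rw [_root_.map_sub, hcorr, _root_.map_sum]
      have hterm : ∀ d ∈ S,
          Phi (fun i => E i - 1) (hXX E hEE) (monomial r 1)
            (∑ j, (a d j / (d.prod fun _ t => (t.factorial : ℂ))) •
              Phi H hHH (monomial d 1) (b j : V))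
          = if d = r then wv r else 0 := by
        intro d hd
        rw [_root_.map_sum]
        have hinner : ∀ j,
            Phi (fun i => E i - 1) (hXX E hEE) (monomial r 1)
              ((a d j / (d.prod fun _ t => (t.factorial : ℂ))) •
                Phi H hHH (monomial d 1) (b j : V))
            = (a d j / (d.prod fun _ t => (t.factorial : ℂ))) •
              Phi H hHH (Dop (monomial r 1) (monomial d 1)) (b j : V) := by
          intro j
          rw [_root_.map_smul, key H E hHH hEE hEH _ _ (hbW j)]
        rw [Finset.sum_congr rfl fun j _ => hinner j]
        by_cases hdr : d = r
        · subst hdr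
          rw [if_pos rfl]
          have hdiag := Dop_diag d (1:ℂ)
          rw [mul_one] at hdiag
          have hsum2 : ∀ j, (a d j / (d.prod fun _ t => (t.factorial : ℂ))) •
              Phi H hHH (Dop (monomial d 1) (monomial d 1)) (b j : V) = a d j • (b j : V) := by
            intro j
            rw [hdiag, ← algebraMap_eq, AlgHom.commutes, Module.algebraMap_end_apply,
              smul_smul, div_mul_cancel₀]
            exact cst_ne_zero d
          rw [Finset.sum_congr rfl fun j _ => hsum2 j]
          have hrepr := b.sum_repr ⟨wv d, hWmem d hr⟩
          have := congrArg (Submodule.subtype (Wsp E)) hrepr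
          rw [_root_.map_sum] at this
          simp only [Submodule.coe_subtype, _root_.map_smul] at this
          rw [ha]
          simp only [hr, dif_pos]
          exact this
        · rw [if_neg hdr]
          apply Finset.sum_eq_zero
          intro j _
          have hsum : (∑ i, d i) ≤ ∑ i, r i := by
            rw [hr, (Finset.mem_filter.mp hd).2]
          obtain ⟨i, hi⟩ := exists_lt_of_ne hdr hsum
          rw [Dop_kill hi, _root_.map_zero, LinearMap.zero_apply, smul_zero]
      rw [Finset.sum_congr rfl hterm, Finset.sum_ite_eq' S r (fun _ => wv r),
        if_pos (hmemS r hr), sub_eq_zero]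
    have hu := IH (v - corr) hmain
    have hcorr_mem : corr ∈ Submodule.span ℂ (Set.range fun x : (Fin n →₀ ℕ) × Fin k =>
        Phi H hHH (monomial x.1 1) (b x.2 : V)) := by
      apply Submodule.sum_mem
      intro d _
      apply Submodule.sum_mem
      intro j _
      exact Submodule.smul_mem _ _ (Submodule.subset_span ⟨(d, j), rfl⟩)
    have hvc : v = (v - corr) + corr := (sub_add_cancel v corr).symm
    rw [hvc]
    exact Submodule.add_mem _ hu hcorr_mem

end Abstract4

noncomputable section Assemble

variable {n : ℕ} {V : Type*} [AddCommGroup V] [Module ℂ V]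

theorem abstract_main (H E : Fin n → Module.End ℂ V)
    (hHH : ∀ i j, Commute (H i) (H j)) (hEE : ∀ i j, Commute (E i) (E j))
    (hEH : ∀ i j, E i * H j = H j * E i + (if i = j then E i else 0))
    (hnil : ∀ i (v : V), ∃ N, (((E i - 1) ^ N : Module.End ℂ V)) v = 0)
    (hfd : FiniteDimensional ℂ (Wsp E)) :
    (∃ (k : ℕ) (v : Fin k → V),
      (∀ a, v a ∈ Wsp E) ∧
      LinearIndependent ℂ (fun p : (Fin n → ℕ) × Fin k =>
        ((List.ofFn fun i => H i ^ (p.1 i)).prod) (v p.2)) ∧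
      Submodule.span ℂ (Set.range fun p : (Fin n → ℕ) × Fin k =>
        ((List.ofFn fun i => H i ^ (p.1 i)).prod) (v p.2)) = ⊤) ∧
    Nonempty (V ≃ₗ[ℂ] TensorProduct ℂ (MvPolynomial (Fin n) ℂ) (Wsp E)) := by
  classical
  set k := Module.finrank ℂ (Wsp E) with hk
  let b : Module.Basis (Fin k) ℂ (Wsp E) := Module.finBasis ℂ (Wsp E)
  set w : Fin k → V := fun j => (b j : V) with hw
  have hwW : ∀ j, w j ∈ Wsp E := fun j => (b j).2
  have hwli : LinearIndependent ℂ w :=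
    b.linearIndependent.map' (Wsp E).subtype (Submodule.ker_subtype _)
  set g : (Fin n → ℕ) × Fin k → (Fin n →₀ ℕ) × Fin k :=
    fun p => (Finsupp.equivFunOnFinite.symm p.1, p.2) with hg
  have hginj : Function.Injective g := by
    intro x y hxy
    rw [hg] at hxy
    have h1 := congrArg Prod.fst hxy
    have h2 := congrArg Prod.snd hxy
    simp only at h1 h2
    exact Prod.ext (Finsupp.equivFunOnFinite.symm.injective h1) h2
  have hgsurj : Function.Surjective g := by
    intro x
    exact ⟨(Finsupp.equivFunOnFinite x.1, x.2), by
      rw [hg]; simp⟩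
  have hfun : (fun p : (Fin n → ℕ) × Fin k =>
      ((List.ofFn fun i => H i ^ (p.1 i)).prod) (w p.2))
      = (fun x : (Fin n →₀ ℕ) × Fin k => Phi H hHH (monomial x.1 1) (w x.2)) ∘ g :=
    funext fun p => by
      rw [Function.comp_apply, hg, Phi_monomial_one]
  have hli : LinearIndependent ℂ (fun p : (Fin n → ℕ) × Fin k =>
      ((List.ofFn fun i => H i ^ (p.1 i)).prod) (w p.2)) := by
    rw [hfun]
    exact (indep H E hHH hEE hEH hwW hwli).comp g hginj
  have hspan : Submodule.span ℂ (Set.range fun p : (Fin n → ℕ) × Fin k =>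
      ((List.ofFn fun i => H i ^ (p.1 i)).prod) (w p.2)) = ⊤ := by
    rw [hfun, Set.range_comp, hgsurj.range_eq, Set.image_univ]
    rw [Submodule.eq_top_iff']
    intro v
    obtain ⟨N, hN⟩ := exists_level E hEE hnil v
    exact vanish_mem_span H E hHH hEE hEH b N v hN
  refine ⟨⟨k, w, hwW, hli, hspan⟩, ?_⟩
  let bV : Module.Basis ((Fin n → ℕ) × Fin k) ℂ V := Module.Basis.mk hli (by rw [hspan])
  let bT : Module.Basis ((Fin n →₀ ℕ) × Fin k) ℂ
      (TensorProduct ℂ (MvPolynomial (Fin n) ℂ) (Wsp E)) :=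
    (MvPolynomial.basisMonomials (Fin n) ℂ).tensorProduct b
  exact ⟨bV.equiv bT (Equiv.prodCongr Finsupp.equivFunOnFinite.symm (Equiv.refl _))⟩

end Assemble


/-- Let `M` be an `sl_{n+1}`-module on which each `e_{0i} - 1` acts locally
nilpotently and whose Whittaker subspace `wh(M) = {v : e_{0i} v = v ∀ i}` is
finite-dimensional.  Then `M` is free of finite rank over `U(h_n) = ℂ[h_1,…,h_n]`: there is a
finite family of Whittaker vectors such that the vectors `h^m v_j` (monomials in the `h_i`
applied to the `v_j`) form a `ℂ`-basis of `M`; in particular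
`M ≅ ℂ[h_1,…,h_n] ⊗ wh(M)` as vector spaces. -/
theorem statement5 (n : ℕ) (M : Type*) [AddCommGroup M] [Module ℂ M]
    [LieRingModule (Matrix (Fin (n + 1)) (Fin (n + 1)) ℂ) M]
    [LieModule ℂ (Matrix (Fin (n + 1)) (Fin (n + 1)) ℂ) M]
    (hnil : ∀ (i : Fin n) (v : M), ∃ N : ℕ,
      ((LieModule.toEnd ℂ (Matrix (Fin (n + 1)) (Fin (n + 1)) ℂ) M
          (Matrix.single 0 i.succ 1) - 1) ^ N) v = 0)
    (hfd : FiniteDimensional ℂ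
      ↥(⨅ i : Fin n, Module.End.eigenspace
          (LieModule.toEnd ℂ (Matrix (Fin (n + 1)) (Fin (n + 1)) ℂ) M
            (Matrix.single 0 i.succ 1)) 1)) :
    (∃ (k : ℕ) (v : Fin k → M),
      (∀ a : Fin k, v a ∈ ⨅ i : Fin n, Module.End.eigenspace
          (LieModule.toEnd ℂ (Matrix (Fin (n + 1)) (Fin (n + 1)) ℂ) M
            (Matrix.single 0 i.succ 1)) 1) ∧
      LinearIndependent ℂ (fun p : (Fin n → ℕ) × Fin k =>
        ((List.ofFn fun i : Fin n =>
          (LieModule.toEnd ℂ (Matrix (Fin (n + 1)) (Fin (n + 1)) ℂ) M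
            (Matrix.single i.succ i.succ 1 - ((n : ℂ) + 1)⁻¹ • 1)) ^ (p.1 i)).prod) (v p.2)) ∧
      Submodule.span ℂ (Set.range (fun p : (Fin n → ℕ) × Fin k =>
        ((List.ofFn fun i : Fin n =>
          (LieModule.toEnd ℂ (Matrix (Fin (n + 1)) (Fin (n + 1)) ℂ) M
            (Matrix.single i.succ i.succ 1 - ((n : ℂ) + 1)⁻¹ • 1)) ^ (p.1 i)).prod) (v p.2))) = ⊤) ∧
    Nonempty (M ≃ₗ[ℂ] TensorProduct ℂ (MvPolynomial (Fin n) ℂ)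
      ↥(⨅ i : Fin n, Module.End.eigenspace
          (LieModule.toEnd ℂ (Matrix (Fin (n + 1)) (Fin (n + 1)) ℂ) M
            (Matrix.single 0 i.succ 1)) 1)) := by
  classical
  have htoE : ∀ X Y : Matrix (Fin (n+1)) (Fin (n+1)) ℂ,
      LieModule.toEnd ℂ (Matrix (Fin (n+1)) (Fin (n+1)) ℂ) M X
        * LieModule.toEnd ℂ (Matrix (Fin (n+1)) (Fin (n+1)) ℂ) M Y
        - LieModule.toEnd ℂ (Matrix (Fin (n+1)) (Fin (n+1)) ℂ) M Y
        * LieModule.toEnd ℂ (Matrix (Fin (n+1)) (Fin (n+1)) ℂ) M X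
        = LieModule.toEnd ℂ (Matrix (Fin (n+1)) (Fin (n+1)) ℂ) M ⁅X, Y⁆ := by
    intro X Y
    rw [LieHom.map_lie, Ring.lie_def]
  have hcomm : ∀ X Y : Matrix (Fin (n+1)) (Fin (n+1)) ℂ, ⁅X, Y⁆ = 0 →
      Commute (LieModule.toEnd ℂ (Matrix (Fin (n+1)) (Fin (n+1)) ℂ) M X)
        (LieModule.toEnd ℂ (Matrix (Fin (n+1)) (Fin (n+1)) ℂ) M Y) := by
    intro X Y h
    have h2 := htoE X Y
    rw [h, _root_.map_zero] at h2
    exact sub_eq_zero.mp h2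
  have hs : ∀ X : Matrix (Fin (n+1)) (Fin (n+1)) ℂ,
      ⁅((n : ℂ) + 1)⁻¹ • (1 : Matrix (Fin (n+1)) (Fin (n+1)) ℂ), X⁆ = 0 := fun X => by
    rw [smul_lie, Ring.lie_def, one_mul, mul_one, sub_self, smul_zero]
  have hs' : ∀ X : Matrix (Fin (n+1)) (Fin (n+1)) ℂ,
      ⁅X, ((n : ℂ) + 1)⁻¹ • (1 : Matrix (Fin (n+1)) (Fin (n+1)) ℂ)⁆ = 0 := fun X => by
    rw [lie_smul, Ring.lie_def, one_mul, mul_one, sub_self, smul_zero]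
  have hHHm : ∀ i j : Fin n,
      ⁅Matrix.single i.succ i.succ (1:ℂ) - ((n : ℂ) + 1)⁻¹ • 1,
        Matrix.single j.succ j.succ (1:ℂ) - ((n : ℂ) + 1)⁻¹ • 1⁆
        = (0 : Matrix (Fin (n+1)) (Fin (n+1)) ℂ) := by
    intro i j
    rw [sub_lie, hs, sub_zero, lie_sub, hs', sub_zero]
    by_cases hij : i = j
    · subst hij
      exact lie_self _
    · rw [Ring.lie_def,
        Matrix.single_mul_single_of_ne (h := fun h => hij (Fin.succ_injective n h)),
        Matrix.single_mul_single_of_ne (h := fun h => hij (Fin.succ_injective n h.symm)),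
        sub_zero]
  have hEEm : ∀ i j : Fin n,
      ⁅Matrix.single (0 : Fin (n+1)) i.succ (1:ℂ),
        Matrix.single (0 : Fin (n+1)) j.succ (1:ℂ)⁆
        = (0 : Matrix (Fin (n+1)) (Fin (n+1)) ℂ) := by
    intro i j
    rw [Ring.lie_def,
      Matrix.single_mul_single_of_ne (h := Fin.succ_ne_zero i),
      Matrix.single_mul_single_of_ne (h := Fin.succ_ne_zero j),
      sub_zero]
  have hEHm : ∀ i j : Fin n,
      ⁅Matrix.single (0 : Fin (n+1)) i.succ (1:ℂ),
        Matrix.single j.succ j.succ (1:ℂ) - ((n : ℂ) + 1)⁻¹ • 1⁆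
      = if i = j then Matrix.single (0 : Fin (n+1)) i.succ (1:ℂ) else 0 := by
    intro i j
    rw [lie_sub, hs', sub_zero, Ring.lie_def,
      Matrix.single_mul_single_of_ne (h := Fin.succ_ne_zero j), sub_zero]
    by_cases hij : i = j
    · subst hij
      rw [Matrix.single_mul_single_same, if_pos rfl, mul_one]
    · rw [Matrix.single_mul_single_of_ne
        (h := fun h => hij (Fin.succ_injective n h)), if_neg hij]
  have hHH : ∀ i j : Fin n,
      Commute (LieModule.toEnd ℂ (Matrix (Fin (n+1)) (Fin (n+1)) ℂ) M
          (Matrix.single i.succ i.succ 1 - ((n : ℂ) + 1)⁻¹ • 1))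
        (LieModule.toEnd ℂ (Matrix (Fin (n+1)) (Fin (n+1)) ℂ) M
          (Matrix.single j.succ j.succ 1 - ((n : ℂ) + 1)⁻¹ • 1)) :=
    fun i j => hcomm _ _ (hHHm i j)
  have hEE : ∀ i j : Fin n,
      Commute (LieModule.toEnd ℂ (Matrix (Fin (n+1)) (Fin (n+1)) ℂ) M
          (Matrix.single 0 i.succ 1))
        (LieModule.toEnd ℂ (Matrix (Fin (n+1)) (Fin (n+1)) ℂ) M
          (Matrix.single 0 j.succ 1)) :=
    fun i j => hcomm _ _ (hEEm i j)
  have hEH : ∀ i j : Fin n,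
      LieModule.toEnd ℂ (Matrix (Fin (n+1)) (Fin (n+1)) ℂ) M (Matrix.single 0 i.succ 1)
        * LieModule.toEnd ℂ (Matrix (Fin (n+1)) (Fin (n+1)) ℂ) M
            (Matrix.single j.succ j.succ 1 - ((n : ℂ) + 1)⁻¹ • 1)
      = LieModule.toEnd ℂ (Matrix (Fin (n+1)) (Fin (n+1)) ℂ) M
            (Matrix.single j.succ j.succ 1 - ((n : ℂ) + 1)⁻¹ • 1)
          * LieModule.toEnd ℂ (Matrix (Fin (n+1)) (Fin (n+1)) ℂ) M (Matrix.single 0 i.succ 1)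
        + (if i = j then LieModule.toEnd ℂ (Matrix (Fin (n+1)) (Fin (n+1)) ℂ) M
            (Matrix.single 0 i.succ 1) else 0) := by
    intro i j
    have h2 := htoE (Matrix.single (0 : Fin (n+1)) i.succ (1:ℂ))
      (Matrix.single j.succ j.succ (1:ℂ) - ((n : ℂ) + 1)⁻¹ • 1)
    rw [hEHm i j] at h2
    have h3 : LieModule.toEnd ℂ (Matrix (Fin (n+1)) (Fin (n+1)) ℂ) M
        (if i = j then Matrix.single (0 : Fin (n+1)) i.succ (1:ℂ) else 0)
        = (if i = j then LieModule.toEnd ℂ (Matrix (Fin (n+1)) (Fin (n+1)) ℂ) M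
            (Matrix.single 0 i.succ 1) else 0) := by
      split_ifs
      · rfl
      · exact _root_.map_zero _
    rw [h3] at h2
    rw [sub_eq_iff_eq_add.mp h2, add_comm]
  exact abstract_main
    (fun i => LieModule.toEnd ℂ (Matrix (Fin (n + 1)) (Fin (n + 1)) ℂ) M
      (Matrix.single i.succ i.succ 1 - ((n : ℂ) + 1)⁻¹ • 1))
    (fun i => LieModule.toEnd ℂ (Matrix (Fin (n + 1)) (Fin (n + 1)) ℂ) M
      (Matrix.single 0 i.succ 1))
    hHH hEE hEH hnil hfd
end

section
/- In the localization U_S of U(sl_{n+1}) at the Ore set generated by e_{01},…,e_{0n}, the elements x_{ij} = e_{ij} e_{0i} e_{0j}^{-1} − h_i (for 1 ≤ i ≠ j ≤ n) commute with h_k and with e_{0k} for all 1 ≤ k ≤ n. -/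
open Matrix

lemma lie_stdBasisMatrix' {N : ℕ} (a b e f : Fin N) :
    ⁅single a b (1:ℂ), single e f (1:ℂ)⁆ =
      (if b = e then single a f (1:ℂ) else 0)
        - (if f = a then single e b (1:ℂ) else 0) := by
  rw [Ring.lie_def]
  by_cases h1 : b = e <;> by_cases h2 : f = a <;>
    simp [h1, h2, Matrix.single_mul_single_same, Matrix.single_mul_single_of_ne]

lemma final_helper {A : Type*} [Ring A] (F E v h H p q r s : A)
    (h1 : F * h - h * F = p) (h2 : E * h - h * E = q) (h3 : v * h - h * v = r)
    (h4 : H * h - h * H = s)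
    (hz : p * E * v + F * (q * v) + F * E * r - s = 0) :
    Commute (F * E * v - H) h := by
  have key : (F * E * v - H) * h - h * (F * E * v - H)
      = (F * h - h * F) * E * v + F * ((E * h - h * E) * v) + F * E * (v * h - h * v)
        - (H * h - h * H) := by noncomm_ring
  rw [h1, h2, h3, h4] at key
  show (F * E * v - H) * h = h * (F * E * v - H)
  exact sub_eq_zero.mp (key.trans hz)

/-- In any associative `ℂ`-algebra receiving the Lie algebra `sl_{n+1}` (such as
the localization `U_S` of `U(sl_{n+1})` at the Ore set generated by `e_{01},…,e_{0n}`) in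
which the images of the `e_{0j}` are invertible, the elements
`x_{ij} = e_{ij} e_{0i} e_{0j}⁻¹ - h_i` (for `1 ≤ i ≠ j ≤ n`) commute with `h_k` and with
`e_{0k}` for all `1 ≤ k ≤ n`.  Here `h_i = e_{ii} - (1/(n+1)) I_{n+1}`. -/
theorem statement6 (n : ℕ) (A : Type*) [Ring A] [Algebra ℂ A]
    (φ : Matrix (Fin (n + 1)) (Fin (n + 1)) ℂ →ₗ[ℂ] A)
    (hφ : ∀ x y : Matrix (Fin (n + 1)) (Fin (n + 1)) ℂ, x.trace = 0 → y.trace = 0 →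
      φ ⁅x, y⁆ = φ x * φ y - φ y * φ x)
    (u : Fin n → Aˣ) (hu : ∀ j : Fin n, (u j : A) = φ (single 0 j.succ 1))
    (i j : Fin n) (hij : i ≠ j) (k : Fin n) :
    Commute
      (φ (single i.succ j.succ 1) * φ (single 0 i.succ 1) * (((u j)⁻¹ : Aˣ) : A)
        - φ (single i.succ i.succ 1 - ((n : ℂ) + 1)⁻¹ • 1))
      (φ (single k.succ k.succ 1 - ((n : ℂ) + 1)⁻¹ • 1)) ∧
    Commute
      (φ (single i.succ j.succ 1) * φ (single 0 i.succ 1) * (((u j)⁻¹ : Aˣ) : A)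
        - φ (single i.succ i.succ 1 - ((n : ℂ) + 1)⁻¹ • 1))
      (φ (single 0 k.succ 1)) := by

  have htr : ∀ a b : Fin (n+1), a ≠ b → (single a b (1:ℂ)).trace = 0 := by
    intro a b h
    exact Matrix.trace_single_eq_of_ne _ _ _ h
  have htrH : ∀ m : Fin n,
      (single m.succ m.succ (1:ℂ) - ((n : ℂ) + 1)⁻¹ • 1).trace = 0 := by
    intro m
    rw [trace_sub, trace_smul, trace_one, Matrix.trace_single_eq_same]
    simp only [smul_eq_mul, Fintype.card_fin]
    have hn1 : ((n : ℂ) + 1) ≠ 0 := Nat.cast_add_one_ne_zero n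
    push_cast
    field_simp
    ring
  have key : ∀ a b e f : Fin (n+1), a ≠ b → e ≠ f →
      φ (single a b 1) * φ (single e f 1)
        - φ (single e f 1) * φ (single a b 1)
      = (if b = e then φ (single a f 1) else 0)
        - (if f = a then φ (single e b 1) else 0) := by
    intro a b e f hab hef
    rw [← hφ _ _ (htr _ _ hab) (htr _ _ hef), lie_stdBasisMatrix', map_sub,
      apply_ite φ, apply_ite φ, map_zero]
  have hlie1 : ∀ x : Matrix (Fin (n+1)) (Fin (n+1)) ℂ,
      ⁅x, (((n : ℂ) + 1)⁻¹ • 1 : Matrix (Fin (n+1)) (Fin (n+1)) ℂ)⁆ = 0 := by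
    intro x
    rw [Ring.lie_def]
    simp
  have hlie2 : ∀ x : Matrix (Fin (n+1)) (Fin (n+1)) ℂ,
      ⁅(((n : ℂ) + 1)⁻¹ • 1 : Matrix (Fin (n+1)) (Fin (n+1)) ℂ), x⁆ = 0 := by
    intro x
    rw [Ring.lie_def]
    simp
  have hls : ∀ x y z : Matrix (Fin (n+1)) (Fin (n+1)) ℂ, ⁅x, y - z⁆ = ⁅x, y⁆ - ⁅x, z⁆ := by
    intro x y z
    simp only [Ring.lie_def]
    noncomm_ring
  have hsl : ∀ x y z : Matrix (Fin (n+1)) (Fin (n+1)) ℂ, ⁅x - y, z⁆ = ⁅x, z⁆ - ⁅y, z⁆ := by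
    intro x y z
    simp only [Ring.lie_def]
    noncomm_ring
  have keyH : ∀ (a b : Fin (n+1)) (m : Fin n), a ≠ b →
      φ (single a b 1) * φ (single m.succ m.succ 1 - ((n : ℂ) + 1)⁻¹ • 1)
        - φ (single m.succ m.succ 1 - ((n : ℂ) + 1)⁻¹ • 1) * φ (single a b 1)
      = (if b = m.succ then φ (single a m.succ 1) else 0)
        - (if m.succ = a then φ (single m.succ b 1) else 0) := by
    intro a b m hab
    rw [← hφ _ _ (htr _ _ hab) (htrH m), hls, hlie1, sub_zero, lie_stdBasisMatrix',
      map_sub, apply_ite φ, apply_ite φ, map_zero]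
  have keyHH : ∀ m l : Fin n,
      φ (single m.succ m.succ 1 - ((n:ℂ)+1)⁻¹ • 1)
          * φ (single l.succ l.succ 1 - ((n:ℂ)+1)⁻¹ • 1)
        - φ (single l.succ l.succ 1 - ((n:ℂ)+1)⁻¹ • 1)
          * φ (single m.succ m.succ 1 - ((n:ℂ)+1)⁻¹ • 1) = 0 := by
    intro m l
    have h := hφ _ _ (htrH m) (htrH l)
    rw [hls, hlie1, sub_zero, hsl, hlie2, sub_zero, lie_stdBasisMatrix'] at h
    rw [← h]
    by_cases hml : m.succ = l.succ
    · rw [hml]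
      simp
    · simp [hml, Ne.symm hml]
  have hsij : i.succ ≠ j.succ := fun h => hij (Fin.succ_inj.mp h)
  have huv : (((u j)⁻¹ : Aˣ) : A) * φ (single 0 j.succ 1) = 1 := by
    rw [← hu j]
    exact Units.inv_mul (u j)
  have hvu : φ (single 0 j.succ 1) * (((u j)⁻¹ : Aˣ) : A) = 1 := by
    rw [← hu j]
    exact Units.mul_inv (u j)
  have hconj : ∀ a b : A, φ (single 0 j.succ 1) * a = b * φ (single 0 j.succ 1) →
      (((u j)⁻¹ : Aˣ) : A) * b = a * (((u j)⁻¹ : Aˣ) : A) := by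
    intro a b hab
    calc (((u j)⁻¹ : Aˣ) : A) * b
        = (((u j)⁻¹ : Aˣ) : A) * (b * φ (single 0 j.succ 1)) * (((u j)⁻¹ : Aˣ) : A) := by
          rw [mul_assoc, mul_assoc, hvu, mul_one]
      _ = (((u j)⁻¹ : Aˣ) : A) * (φ (single 0 j.succ 1) * a) * (((u j)⁻¹ : Aˣ) : A) := by
          rw [hab]
      _ = a * (((u j)⁻¹ : Aˣ) : A) := by
          rw [← mul_assoc, huv, one_mul]
  have A1 : ∀ m : Fin n,
      φ (single i.succ j.succ 1) * φ (single m.succ m.succ 1 - ((n:ℂ)+1)⁻¹ • 1)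
        - φ (single m.succ m.succ 1 - ((n:ℂ)+1)⁻¹ • 1) * φ (single i.succ j.succ 1)
      = (if j = m then φ (single i.succ m.succ 1) else 0)
        - (if m = i then φ (single m.succ j.succ 1) else 0) := by
    intro m
    rw [keyH i.succ j.succ m hsij]
    simp only [Fin.succ_inj]
  have A2 : ∀ m l : Fin n,
      φ (single 0 m.succ 1) * φ (single l.succ l.succ 1 - ((n:ℂ)+1)⁻¹ • 1)
        - φ (single l.succ l.succ 1 - ((n:ℂ)+1)⁻¹ • 1) * φ (single 0 m.succ 1)
      = if m = l then φ (single 0 l.succ 1) else 0 := by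
    intro m l
    rw [keyH 0 m.succ l (Fin.succ_ne_zero m).symm]
    rw [if_neg (Fin.succ_ne_zero l), sub_zero]
    simp only [Fin.succ_inj]
  have A3 : ∀ m l : Fin n,
      φ (single 0 m.succ 1) * φ (single 0 l.succ 1)
      = φ (single 0 l.succ 1) * φ (single 0 m.succ 1) := by
    intro m l
    have h := key 0 m.succ 0 l.succ (Fin.succ_ne_zero m).symm (Fin.succ_ne_zero l).symm
    rw [if_neg (Fin.succ_ne_zero m), if_neg (Fin.succ_ne_zero l), sub_zero] at h
    exact sub_eq_zero.mp h
  have A4 : ∀ m : Fin n,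
      φ (single i.succ j.succ 1) * φ (single 0 m.succ 1)
        - φ (single 0 m.succ 1) * φ (single i.succ j.succ 1)
      = -(if m = i then φ (single 0 j.succ 1) else 0) := by
    intro m
    rw [key i.succ j.succ 0 m.succ hsij (Fin.succ_ne_zero m).symm]
    rw [if_neg (Fin.succ_ne_zero j), zero_sub]
    simp only [Fin.succ_inj]
  have hvE : ∀ m : Fin n,
      (((u j)⁻¹ : Aˣ) : A) * φ (single 0 m.succ 1)
        = φ (single 0 m.succ 1) * (((u j)⁻¹ : Aˣ) : A) :=
    fun m => hconj _ _ (A3 j m)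
  have hvH : ∀ l : Fin n, j ≠ l →
      (((u j)⁻¹ : Aˣ) : A) * φ (single l.succ l.succ 1 - ((n:ℂ)+1)⁻¹ • 1)
        = φ (single l.succ l.succ 1 - ((n:ℂ)+1)⁻¹ • 1) * (((u j)⁻¹ : Aˣ) : A) := by
    intro l hjl
    refine hconj _ _ ?_
    have h := A2 j l
    rw [if_neg hjl] at h
    exact sub_eq_zero.mp h
  by_cases hki : k = i
  · subst hki
    constructor
    · -- part 1, k = i
      have h1 : φ (single k.succ j.succ 1)
            * φ (single k.succ k.succ 1 - ((n:ℂ)+1)⁻¹ • 1)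
          - φ (single k.succ k.succ 1 - ((n:ℂ)+1)⁻¹ • 1)
            * φ (single k.succ j.succ 1)
          = -(φ (single k.succ j.succ 1)) := by
        have h := A1 k
        rw [if_neg (Ne.symm hij), if_pos rfl, zero_sub] at h
        exact h
      have h2 : φ (single 0 k.succ 1)
            * φ (single k.succ k.succ 1 - ((n:ℂ)+1)⁻¹ • 1)
          - φ (single k.succ k.succ 1 - ((n:ℂ)+1)⁻¹ • 1)
            * φ (single 0 k.succ 1)
          = φ (single 0 k.succ 1) := by
        have h := A2 k k
        rw [if_pos rfl] at h
        exact h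
      have h3 : (((u j)⁻¹ : Aˣ) : A) * φ (single k.succ k.succ 1 - ((n:ℂ)+1)⁻¹ • 1)
          - φ (single k.succ k.succ 1 - ((n:ℂ)+1)⁻¹ • 1) * (((u j)⁻¹ : Aˣ) : A)
          = 0 := sub_eq_zero.mpr (hvH k (Ne.symm hij))
      refine final_helper _ _ _ _ _ _ _ _ _ h1 h2 h3 (sub_self _) ?_
      noncomm_ring
    · -- part 2, k = i
      have h1 : φ (single k.succ j.succ 1) * φ (single 0 k.succ 1)
          - φ (single 0 k.succ 1) * φ (single k.succ j.succ 1)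
          = -(φ (single 0 j.succ 1)) := by
        have h := A4 k
        rw [if_pos rfl] at h
        exact h
      have h2 : φ (single 0 k.succ 1) * φ (single 0 k.succ 1)
          - φ (single 0 k.succ 1) * φ (single 0 k.succ 1) = 0 := sub_self _
      have h3 : (((u j)⁻¹ : Aˣ) : A) * φ (single 0 k.succ 1)
          - φ (single 0 k.succ 1) * (((u j)⁻¹ : Aˣ) : A) = 0 :=
        sub_eq_zero.mpr (hvE k)
      have h4 : φ (single k.succ k.succ 1 - ((n:ℂ)+1)⁻¹ • 1)
            * φ (single 0 k.succ 1)
          - φ (single 0 k.succ 1)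
            * φ (single k.succ k.succ 1 - ((n:ℂ)+1)⁻¹ • 1)
          = -(φ (single 0 k.succ 1)) := by
        rw [← neg_sub]
        have h := A2 k k
        rw [if_pos rfl] at h
        rw [h]
      refine final_helper _ _ _ _ _ _ _ _ _ h1 h2 h3 h4 ?_
      have e1 : φ (single 0 j.succ 1) * φ (single 0 k.succ 1)
          * (((u j)⁻¹ : Aˣ) : A) = φ (single 0 k.succ 1) := by
        rw [A3 j k, mul_assoc, hvu, mul_one]
      have e2 : -(φ (single 0 j.succ 1)) * φ (single 0 k.succ 1)
            * (((u j)⁻¹ : Aˣ) : A)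
          + φ (single k.succ j.succ 1) * (0 * (((u j)⁻¹ : Aˣ) : A))
          + φ (single k.succ j.succ 1) * φ (single 0 k.succ 1) * 0
          - -(φ (single 0 k.succ 1))
          = φ (single 0 k.succ 1)
            - φ (single 0 j.succ 1) * φ (single 0 k.succ 1)
              * (((u j)⁻¹ : Aˣ) : A) := by
        noncomm_ring
      rw [e2, e1, sub_self]
  · by_cases hkj : k = j
    · subst hkj
      constructor
      · -- part 1, k = j
        have h1 : φ (single i.succ k.succ 1)
              * φ (single k.succ k.succ 1 - ((n:ℂ)+1)⁻¹ • 1)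
            - φ (single k.succ k.succ 1 - ((n:ℂ)+1)⁻¹ • 1)
              * φ (single i.succ k.succ 1)
            = φ (single i.succ k.succ 1) := by
          have h := A1 k
          rw [if_pos rfl, if_neg hki, sub_zero] at h
          exact h
        have h2 : φ (single 0 i.succ 1)
              * φ (single k.succ k.succ 1 - ((n:ℂ)+1)⁻¹ • 1)
            - φ (single k.succ k.succ 1 - ((n:ℂ)+1)⁻¹ • 1)
              * φ (single 0 i.succ 1)
            = 0 := by
          have h := A2 i k
          rw [if_neg hij] at h
          exact h
        have h3 : (((u k)⁻¹ : Aˣ) : A) * φ (single k.succ k.succ 1 - ((n:ℂ)+1)⁻¹ • 1)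
            - φ (single k.succ k.succ 1 - ((n:ℂ)+1)⁻¹ • 1) * (((u k)⁻¹ : Aˣ) : A)
            = -(((u k)⁻¹ : Aˣ) : A) := by
          have h := A2 k k
          rw [if_pos rfl] at h
          rw [sub_eq_iff_eq_add] at h
          have h5 : φ (single 0 k.succ 1)
              * φ (single k.succ k.succ 1 - ((n:ℂ)+1)⁻¹ • 1)
              = (φ (single k.succ k.succ 1 - ((n:ℂ)+1)⁻¹ • 1) + 1)
                * φ (single 0 k.succ 1) := by
            rw [add_mul, one_mul, h]
            abel
          have h6 := hconj _ _ h5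
          rw [mul_add, mul_one] at h6
          rw [← h6]
          abel
        refine final_helper _ _ _ _ _ _ _ _ _ h1 h2 h3 (keyHH i k) ?_
        noncomm_ring
      · -- part 2, k = j
        have h1 : φ (single i.succ k.succ 1) * φ (single 0 k.succ 1)
            - φ (single 0 k.succ 1) * φ (single i.succ k.succ 1) = 0 := by
          have h := A4 k
          rw [if_neg hki, neg_zero] at h
          exact h
        have h2 : φ (single 0 i.succ 1) * φ (single 0 k.succ 1)
            - φ (single 0 k.succ 1) * φ (single 0 i.succ 1) = 0 :=
          sub_eq_zero.mpr (A3 i k)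
        have h3 : (((u k)⁻¹ : Aˣ) : A) * φ (single 0 k.succ 1)
            - φ (single 0 k.succ 1) * (((u k)⁻¹ : Aˣ) : A) = 0 := by
          rw [huv, hvu, sub_self]
        have h4 : φ (single i.succ i.succ 1 - ((n:ℂ)+1)⁻¹ • 1)
              * φ (single 0 k.succ 1)
            - φ (single 0 k.succ 1)
              * φ (single i.succ i.succ 1 - ((n:ℂ)+1)⁻¹ • 1) = 0 := by
          rw [← neg_sub]
          have h := A2 k i
          rw [if_neg hki] at h
          rw [h, neg_zero]
        refine final_helper _ _ _ _ _ _ _ _ _ h1 h2 h3 h4 ?_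
        noncomm_ring
    · constructor
      · -- part 1, k ∉ {i, j}
        have h1 : φ (single i.succ j.succ 1)
              * φ (single k.succ k.succ 1 - ((n:ℂ)+1)⁻¹ • 1)
            - φ (single k.succ k.succ 1 - ((n:ℂ)+1)⁻¹ • 1)
              * φ (single i.succ j.succ 1) = 0 := by
          have h := A1 k
          rw [if_neg (Ne.symm hkj), if_neg hki, sub_zero] at h
          exact h
        have h2 : φ (single 0 i.succ 1)
              * φ (single k.succ k.succ 1 - ((n:ℂ)+1)⁻¹ • 1)
            - φ (single k.succ k.succ 1 - ((n:ℂ)+1)⁻¹ • 1)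
              * φ (single 0 i.succ 1) = 0 := by
          have h := A2 i k
          rw [if_neg (fun h' => hki h'.symm)] at h
          exact h
        have h3 : (((u j)⁻¹ : Aˣ) : A) * φ (single k.succ k.succ 1 - ((n:ℂ)+1)⁻¹ • 1)
            - φ (single k.succ k.succ 1 - ((n:ℂ)+1)⁻¹ • 1) * (((u j)⁻¹ : Aˣ) : A)
            = 0 := sub_eq_zero.mpr (hvH k (Ne.symm hkj))
        have h4 := keyHH i k
        refine final_helper _ _ _ _ _ _ _ _ _ h1 h2 h3 h4 ?_
        noncomm_ring
      · -- part 2, k ∉ {i, j}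
        have h1 : φ (single i.succ j.succ 1) * φ (single 0 k.succ 1)
            - φ (single 0 k.succ 1) * φ (single i.succ j.succ 1) = 0 := by
          have h := A4 k
          rw [if_neg hki, neg_zero] at h
          exact h
        have h2 : φ (single 0 i.succ 1) * φ (single 0 k.succ 1)
            - φ (single 0 k.succ 1) * φ (single 0 i.succ 1) = 0 :=
          sub_eq_zero.mpr (A3 i k)
        have h3 : (((u j)⁻¹ : Aˣ) : A) * φ (single 0 k.succ 1)
            - φ (single 0 k.succ 1) * (((u j)⁻¹ : Aˣ) : A) = 0 :=
          sub_eq_zero.mpr (hvE k)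
        have h4 : φ (single i.succ i.succ 1 - ((n:ℂ)+1)⁻¹ • 1)
              * φ (single 0 k.succ 1)
            - φ (single 0 k.succ 1)
              * φ (single i.succ i.succ 1 - ((n:ℂ)+1)⁻¹ • 1) = 0 := by
          rw [← neg_sub]
          have h := A2 k i
          rw [if_neg hki] at h
          rw [h, neg_zero]
        refine final_helper _ _ _ _ _ _ _ _ _ h1 h2 h3 h4 ?_
        noncomm_ring
end

section
/- In the localization U_S of U(sl_{n+1}), the elements ω_k = e_{k0} e_{0k} + Σ_{j=1}^n (e_{kj} − (δ_{jk}/(n+1)) I_{n+1})(h_j − 1) e_{0k} e_{0j}^{-1} (for 1 ≤ k ≤ n, with e_{kk} interpreted appropriately so that e_{kk} − (1/(n+1))I_{n+1} = h_k) commute with h_i and with e_{0i} for all 1 ≤ i ≤ n. -/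
open Matrix

open Matrix

section AuxRing

variable {A : Type*} [Ring A]

private lemma statement7_conj_inv (v : Aˣ) {h x : A} (e : (v : A) * h = x * (v : A)) :
    (↑v⁻¹ : A) * x = h * ↑v⁻¹ := by
  calc (↑v⁻¹ : A) * x = ↑v⁻¹ * (x * (↑v * ↑v⁻¹)) := by rw [Units.mul_inv, mul_one]
    _ = ↑v⁻¹ * ((x * ↑v) * ↑v⁻¹) := by rw [mul_assoc]
    _ = ↑v⁻¹ * (((v : A) * h) * ↑v⁻¹) := by rw [e]
    _ = (↑v⁻¹ * ((v : A) * h)) * ↑v⁻¹ := by rw [← mul_assoc]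
    _ = h * ↑v⁻¹ := by rw [Units.inv_mul_cancel_left]

private lemma statement7_ok_mul {h x y : A} {m m' : ℤ} (hx : x * h = h * x + m • x)
    (hy : y * h = h * y + m' • y) : (x * y) * h = h * (x * y) + (m + m') • (x * y) := by
  calc x * y * h = x * (h * y + m' • y) := by rw [mul_assoc, hy]
    _ = (x * h) * y + m' • (x * y) := by rw [mul_add, mul_smul_comm, mul_assoc]
    _ = (h * x + m • x) * y + m' • (x * y) := by rw [hx]
    _ = h * (x * y) + (m + m') • (x * y) := by
        rw [add_mul, smul_mul_assoc, add_smul, mul_assoc, add_assoc]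

private theorem statement7_aux {n : ℕ} (f : Fin n → Aˣ) (H X : Fin n → A) (g : A) (k i : Fin n)
    (hff : ∀ a b, (f a : A) * f b = f b * f a)
    (hfH : ∀ a b, (f a : A) * H b = H b * f a + (if a = b then (f a : A) else 0))
    (hHH : ∀ b, H b * H i = H i * H b)
    (hfX : ∀ j, (f i : A) * X j = X j * f i + (if i = k then (f j : A) else 0))
    (hXH : ∀ j, X j * H i = H i * X j +
      ((if j = i then X j else 0) - (if k = i then X j else 0)))
    (hgH : g * H i = H i * g - (if k = i then g else 0))
    (hfg : (f i : A) * g = g * f i - (if i = k then ∑ j, H j else 0) - X i) :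
    Commute (g * (f k : A) + ∑ j, X j * (H j - 1) * ((f k : A) * ↑(f j)⁻¹)) (H i) ∧
    Commute (g * (f k : A) + ∑ j, X j * (H j - 1) * ((f k : A) * ↑(f j)⁻¹)) (f i : A) := by
  have hcomm : ∀ a b, Commute ((f a : A)) ((f b : A)) := fun a b => hff a b
  have hfinv : ∀ a b, (f a : A) * ↑(f b)⁻¹ = ↑(f b)⁻¹ * (f a : A) :=
    fun a b => (hcomm a b).units_inv_right
  have okf : ∀ a, (f a : A) * H i
      = H i * (f a : A) + ((if a = i then (1 : ℤ) else 0)) • (f a : A) := by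
    intro a
    rw [hfH a i]
    split_ifs <;> simp
  have okfinv : ∀ a, (↑(f a)⁻¹ : A) * H i
      = H i * (↑(f a)⁻¹ : A) + (-(if a = i then (1 : ℤ) else 0)) • (↑(f a)⁻¹ : A) := by
    intro a
    have e : (f a : A) * (H i - (if a = i then (1 : ℤ) else 0) • (1 : A))
        = H i * (f a : A) := by
      rw [mul_sub, okf a, mul_smul_comm, mul_one]
      abel
    have h2 := statement7_conj_inv (f a) e
    rw [h2, sub_mul, smul_mul_assoc, one_mul, neg_smul]
    abel
  have okX : ∀ j, X j * H i = H i * X j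
      + ((if j = i then (1 : ℤ) else 0) - (if k = i then 1 else 0)) • X j := by
    intro j
    rw [hXH j]
    split_ifs <;> simp
  have okH : ∀ j, (H j - 1) * H i = H i * (H j - 1) + (0 : ℤ) • (H j - 1) := by
    intro j
    rw [sub_mul, hHH j, mul_sub, zero_smul, add_zero, mul_one, one_mul]
  have okg : g * H i = H i * g + (-(if k = i then (1 : ℤ) else 0)) • g := by
    rw [hgH]
    split_ifs <;> simp [sub_eq_add_neg]
  constructor
  · apply Commute.add_left
    · have h0 := statement7_ok_mul okg (okf k)
      rwa [neg_add_cancel, zero_smul, add_zero] at h0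
    · apply Commute.sum_left
      intro j _
      have h0 := statement7_ok_mul (statement7_ok_mul (okX j) (okH j)) (statement7_ok_mul (okf k) (okfinv j))
      have hco : (((if j = i then (1 : ℤ) else 0) - (if k = i then 1 else 0)) + 0)
          + ((if k = i then (1 : ℤ) else 0) + -(if j = i then (1 : ℤ) else 0)) = 0 := by
        split_ifs <;> ring
      rw [hco, zero_smul, add_zero] at h0
      exact h0
  · have hfH' : ∀ a b, (f a : A) * (H b - 1)
        = (H b - 1) * (f a : A) + (if a = b then (f a : A) else 0) := by
      intro a b
      rw [mul_sub, hfH a b, sub_mul, mul_one, one_mul]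
      abel
    have hfC : ∀ a, (f a : A) * ((f k : A) * ↑(f a)⁻¹) = (f k : A) := by
      intro a
      rw [← mul_assoc, hff, mul_assoc, Units.mul_inv, mul_one]
    have hfC' : ∀ a b c, (f a : A) * ((f b : A) * ↑(f c)⁻¹)
        = ((f b : A) * ↑(f c)⁻¹) * (f a : A) := by
      intro a b c
      rw [← mul_assoc, hff, mul_assoc, hfinv, ← mul_assoc]
    have key : ∀ j, (f i : A) * (X j * (H j - 1) * ((f k : A) * ↑(f j)⁻¹))
        = X j * (H j - 1) * ((f k : A) * ↑(f j)⁻¹) * (f i : A)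
          + ((if j = i then X j * (f k : A) else 0)
            + (if i = k then H j * (f k : A) else 0)) := by
      intro j
      have sub2 : X j * ((if i = j then (f i : A) else 0) * ((f k : A) * ↑(f j)⁻¹))
          = (if j = i then X j * (f k : A) else 0) := by
        by_cases h : j = i
        · subst h
          rw [if_pos rfl, if_pos rfl, hfC]
        · rw [if_neg (fun hh => h hh.symm), if_neg h, zero_mul, mul_zero]
      have sub3 : (if i = k then (f j : A) else 0) * ((H j - 1) * ((f k : A) * ↑(f j)⁻¹))
          = (if i = k then H j * (f k : A) else 0) := by
        by_cases h : i = k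
        · rw [if_pos h, if_pos h, ← mul_assoc]
          have e4 : (f j : A) * (H j - 1) = H j * (f j : A) := by
            rw [mul_sub, hfH j j, if_pos rfl, mul_one]
            abel
          rw [e4, mul_assoc, hfC]
        · rw [if_neg h, if_neg h, zero_mul]
      calc (f i : A) * (X j * (H j - 1) * ((f k : A) * ↑(f j)⁻¹))
          = ((f i : A) * X j) * ((H j - 1) * ((f k : A) * ↑(f j)⁻¹)) := by
            simp only [mul_assoc]
        _ = X j * ((f i : A) * ((H j - 1) * ((f k : A) * ↑(f j)⁻¹)))
            + (if i = k then (f j : A) else 0) * ((H j - 1) * ((f k : A) * ↑(f j)⁻¹)) := by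
            rw [hfX j, add_mul, mul_assoc]
        _ = X j * (((f i : A) * (H j - 1)) * ((f k : A) * ↑(f j)⁻¹))
            + (if i = k then H j * (f k : A) else 0) := by
            rw [sub3, ← mul_assoc ((f i : A))]
        _ = X j * ((H j - 1) * ((f i : A) * ((f k : A) * ↑(f j)⁻¹)))
            + X j * ((if i = j then (f i : A) else 0) * ((f k : A) * ↑(f j)⁻¹))
            + (if i = k then H j * (f k : A) else 0) := by
            rw [hfH' i j, add_mul, mul_assoc (H j - 1), mul_add]
        _ = X j * ((H j - 1) * (((f k : A) * ↑(f j)⁻¹) * (f i : A)))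
            + (if j = i then X j * (f k : A) else 0)
            + (if i = k then H j * (f k : A) else 0) := by
            rw [hfC' i k j, sub2]
        _ = X j * (H j - 1) * ((f k : A) * ↑(f j)⁻¹) * (f i : A)
            + ((if j = i then X j * (f k : A) else 0)
              + (if i = k then H j * (f k : A) else 0)) := by
            simp only [mul_assoc, add_assoc]
    have hsum : (f i : A) * (∑ j, X j * (H j - 1) * ((f k : A) * ↑(f j)⁻¹))
        = (∑ j, X j * (H j - 1) * ((f k : A) * ↑(f j)⁻¹)) * (f i : A)
          + (X i * (f k : A) + (if i = k then (∑ j, H j) * (f k : A) else 0)) := by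
      rw [Finset.mul_sum]
      simp only [key]
      rw [Finset.sum_add_distrib, Finset.sum_add_distrib, ← Finset.sum_mul]
      congr 1
      congr 1
      · simp
      · split_ifs with h
        · rw [Finset.sum_mul]
        · simp
    have hG : (f i : A) * (g * (f k : A))
        = (g * (f k : A)) * (f i : A)
          - (if i = k then (∑ j, H j) * (f k : A) else 0) - X i * (f k : A) := by
      rw [← mul_assoc, hfg, sub_mul, sub_mul, mul_assoc, hff i k, ← mul_assoc,
        ite_mul, zero_mul]
    have hfin : (f i : A) * (g * (f k : A) + ∑ j, X j * (H j - 1) * ((f k : A) * ↑(f j)⁻¹))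
        = (g * (f k : A) + ∑ j, X j * (H j - 1) * ((f k : A) * ↑(f j)⁻¹)) * (f i : A) := by
      rw [mul_add, hG, hsum, add_mul]
      abel
    exact hfin.symm

end AuxRing


private lemma hB1 {n : ℕ} (a b : Fin n) :
    single (0 : Fin (n+1)) a.succ (1 : ℂ) * single 0 b.succ 1
      - single (0 : Fin (n+1)) b.succ 1 * single 0 a.succ 1 = 0 := by
  simp [Fin.succ_ne_zero a, Fin.succ_ne_zero b]

private lemma hB2 {n : ℕ} (a b : Fin n) :
    single (0 : Fin (n+1)) a.succ (1 : ℂ) *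
        (single b.succ b.succ 1 - ((n : ℂ) + 1)⁻¹ • 1)
      - (single b.succ b.succ 1 - ((n : ℂ) + 1)⁻¹ • 1) *
        single (0 : Fin (n+1)) a.succ (1 : ℂ)
    = if a = b then single (0 : Fin (n+1)) a.succ (1 : ℂ) else 0 := by
  rcases eq_or_ne a b with rfl | h
  · simp [mul_sub, sub_mul, Fin.succ_ne_zero a, (Fin.succ_ne_zero a).symm]
  · simp [mul_sub, sub_mul, Fin.succ_ne_zero a, Fin.succ_ne_zero b,
      (Fin.succ_ne_zero a).symm, Fin.succ_inj, h]

private lemma hB3 {n : ℕ} (k i j : Fin n) :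
    single (0 : Fin (n+1)) i.succ (1 : ℂ) *
        (single k.succ j.succ 1 - (if j = k then ((n : ℂ) + 1)⁻¹ else 0) • 1)
      - (single k.succ j.succ 1 - (if j = k then ((n : ℂ) + 1)⁻¹ else 0) • 1) *
        single (0 : Fin (n+1)) i.succ (1 : ℂ)
    = if i = k then single (0 : Fin (n+1)) j.succ (1 : ℂ) else 0 := by
  rcases eq_or_ne i k with rfl | h
  · simp [mul_sub, sub_mul, Fin.succ_ne_zero i, Fin.succ_ne_zero j,
      (Fin.succ_ne_zero j).symm]
  · simp [mul_sub, sub_mul, Fin.succ_ne_zero i, Fin.succ_ne_zero j,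
      (Fin.succ_ne_zero j).symm, Fin.succ_inj, h]

private lemma hB4 {n : ℕ} (a b : Fin n) :
    (single a.succ a.succ (1 : ℂ) - ((n : ℂ) + 1)⁻¹ • 1) *
        (single b.succ b.succ 1 - ((n : ℂ) + 1)⁻¹ • 1)
      = (single b.succ b.succ (1 : ℂ) - ((n : ℂ) + 1)⁻¹ • 1) *
        (single a.succ a.succ 1 - ((n : ℂ) + 1)⁻¹ • 1) := by
  rcases eq_or_ne a b with rfl | h
  · rfl
  · simp [mul_sub, sub_mul, smul_sub, smul_smul, Fin.succ_inj, h, h.symm]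
    abel

private lemma hB5 {n : ℕ} (k i : Fin n) :
    single k.succ (0 : Fin (n+1)) (1 : ℂ) *
        (single i.succ i.succ 1 - ((n : ℂ) + 1)⁻¹ • 1)
      - (single i.succ i.succ 1 - ((n : ℂ) + 1)⁻¹ • 1) *
        single k.succ (0 : Fin (n+1)) (1 : ℂ)
    = -(if k = i then single k.succ (0 : Fin (n+1)) (1 : ℂ) else 0) := by
  rcases eq_or_ne k i with rfl | h
  · simp [mul_sub, sub_mul, Fin.succ_ne_zero k, (Fin.succ_ne_zero k).symm]
    abel
  · simp [mul_sub, sub_mul, Fin.succ_ne_zero k, Fin.succ_ne_zero i,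
      (Fin.succ_ne_zero i).symm, Fin.succ_inj, h, h.symm]

private lemma hB6 {n : ℕ} (k i j : Fin n) :
    (single k.succ j.succ (1 : ℂ) - (if j = k then ((n : ℂ) + 1)⁻¹ else 0) • 1) *
        (single i.succ i.succ 1 - ((n : ℂ) + 1)⁻¹ • 1)
      - (single i.succ i.succ 1 - ((n : ℂ) + 1)⁻¹ • 1) *
        (single k.succ j.succ (1 : ℂ) - (if j = k then ((n : ℂ) + 1)⁻¹ else 0) • 1)
    = (if j = i then
          single k.succ j.succ (1 : ℂ) - (if j = k then ((n : ℂ) + 1)⁻¹ else 0) • 1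
        else 0)
      - (if k = i then
          single k.succ j.succ (1 : ℂ) - (if j = k then ((n : ℂ) + 1)⁻¹ else 0) • 1
        else 0) := by
  by_cases h1 : j = i <;> by_cases h2 : k = i <;> by_cases h3 : j = k <;>
    simp_all [mul_sub, sub_mul, smul_sub, smul_smul, Fin.succ_inj, @eq_comm (Fin n)] <;>
    abel


private lemma statement7_one_eq (m : ℕ) :
    (1 : Matrix (Fin m) (Fin m) ℂ) = ∑ j : Fin m, single j j (1 : ℂ) := by
  ext a b
  rw [Matrix.sum_apply]
  rcases eq_or_ne a b with rfl | h
  · simp [single, Matrix.one_apply]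
  · rw [Matrix.one_apply_ne h, Finset.sum_eq_zero]
    intro x _
    apply Matrix.single_apply_of_ne
    rintro ⟨rfl, rfl⟩
    exact h rfl

private lemma statement7_sum_succ (n : ℕ) :
    (∑ j : Fin n, single (j.succ) (j.succ) (1 : ℂ) :
        Matrix (Fin (n + 1)) (Fin (n + 1)) ℂ)
      = 1 - single 0 0 1 := by
  have h := statement7_one_eq (n + 1)
  rw [Fin.sum_univ_succ] at h
  rw [h]
  abel

private lemma hB7 {n : ℕ} (k i : Fin n) :
    single (0 : Fin (n+1)) i.succ (1 : ℂ) * single k.succ 0 1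
      - single k.succ (0 : Fin (n+1)) 1 * single 0 i.succ 1
    = -(if i = k then
          ∑ j : Fin n, (single j.succ j.succ (1 : ℂ) - ((n : ℂ) + 1)⁻¹ • 1)
        else 0)
      - (single k.succ i.succ (1 : ℂ)
          - (if i = k then ((n : ℂ) + 1)⁻¹ else 0) • 1) := by
  have hne : ((n : ℂ) + 1) ≠ 0 := Nat.cast_add_one_ne_zero n
  have hsum : ∑ j : Fin n, (single j.succ j.succ (1 : ℂ) - ((n : ℂ) + 1)⁻¹ • 1)
      = (1 - single 0 0 1) - ((n : ℂ) * ((n : ℂ) + 1)⁻¹) • 1 := by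
    rw [Finset.sum_sub_distrib, statement7_sum_succ, Finset.sum_const, Finset.card_univ,
      Fintype.card_fin, ← Nat.cast_smul_eq_nsmul ℂ, smul_smul]
  rcases eq_or_ne i k with rfl | h
  · rw [if_pos rfl, if_pos rfl, hsum]
    simp only [Matrix.single_mul_single_same, one_mul]
    match_scalars <;> field_simp <;> ring
  · simp [h, Fin.succ_inj]


/-- In any associative `ℂ`-algebra receiving the Lie algebra `sl_{n+1}` (such as
the localization `U_S` of `U(sl_{n+1})`) in which the images of the `e_{0j}` are invertible,
the elements
`ω_k = e_{k0} e_{0k} + Σ_{j=1}^n (e_{kj} - (δ_{jk}/(n+1)) I_{n+1})(h_j - 1) e_{0k} e_{0j}⁻¹`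
(for `1 ≤ k ≤ n`, where `e_{kk} - (1/(n+1)) I_{n+1} = h_k`) commute with `h_i` and with
`e_{0i}` for all `1 ≤ i ≤ n`. -/
theorem statement7 (n : ℕ) (A : Type*) [Ring A] [Algebra ℂ A]
    (φ : Matrix (Fin (n + 1)) (Fin (n + 1)) ℂ →ₗ[ℂ] A)
    (hφ : ∀ x y : Matrix (Fin (n + 1)) (Fin (n + 1)) ℂ, x.trace = 0 → y.trace = 0 →
      φ ⁅x, y⁆ = φ x * φ y - φ y * φ x)
    (u : Fin n → Aˣ) (hu : ∀ j : Fin n, (u j : A) = φ (single 0 j.succ 1))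
    (k : Fin n) (i : Fin n) :
    Commute
      (φ (single k.succ 0 1) * φ (single 0 k.succ 1)
        + ∑ j : Fin n,
            (φ (single k.succ j.succ 1 - (if j = k then ((n : ℂ) + 1)⁻¹ else 0) • 1)) *
              (φ (single j.succ j.succ 1 - ((n : ℂ) + 1)⁻¹ • 1) - 1) *
              ((u k : A) * (((u j)⁻¹ : Aˣ) : A)))
      (φ (single i.succ i.succ 1 - ((n : ℂ) + 1)⁻¹ • 1)) ∧
    Commute
      (φ (single k.succ 0 1) * φ (single 0 k.succ 1)
        + ∑ j : Fin n,
            (φ (single k.succ j.succ 1 - (if j = k then ((n : ℂ) + 1)⁻¹ else 0) • 1)) *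
              (φ (single j.succ j.succ 1 - ((n : ℂ) + 1)⁻¹ • 1) - 1) *
              ((u k : A) * (((u j)⁻¹ : Aˣ) : A)))
      (φ (single 0 i.succ 1)) := by
  have hne : ((n : ℂ) + 1) ≠ 0 := Nat.cast_add_one_ne_zero n
  have trf : ∀ a : Fin n, (single (0 : Fin (n+1)) a.succ (1 : ℂ)).trace = 0 :=
    fun a => Matrix.trace_single_eq_of_ne _ _ _ (Fin.succ_ne_zero a).symm
  have trg : (single (k.succ) (0 : Fin (n+1)) (1 : ℂ)).trace = 0 :=
    Matrix.trace_single_eq_of_ne _ _ _ (Fin.succ_ne_zero k)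
  have trH : ∀ a : Fin n,
      (single a.succ a.succ (1 : ℂ)
        - ((n : ℂ) + 1)⁻¹ • (1 : Matrix (Fin (n+1)) (Fin (n+1)) ℂ)).trace = 0 := by
    intro a
    rw [trace_sub, trace_smul, trace_one, Matrix.trace_single_eq_same]
    simp only [Fintype.card_fin, smul_eq_mul]
    push_cast
    field_simp
    ring
  have trX : ∀ j : Fin n,
      (single k.succ j.succ (1 : ℂ)
        - (if j = k then ((n : ℂ) + 1)⁻¹ else 0)
          • (1 : Matrix (Fin (n+1)) (Fin (n+1)) ℂ)).trace = 0 := by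
    intro j
    rcases eq_or_ne j k with rfl | h
    · rw [if_pos rfl]
      exact trH j
    · rw [if_neg h, zero_smul, sub_zero]
      exact Matrix.trace_single_eq_of_ne _ _ _ (fun hc => h (Fin.succ_injective n hc.symm))
  have brk : ∀ x y : Matrix (Fin (n + 1)) (Fin (n + 1)) ℂ, x.trace = 0 → y.trace = 0 →
      φ x * φ y = φ y * φ x + φ (x * y - y * x) := by
    intro x y hx hy
    have h := hφ x y hx hy
    rw [Ring.lie_def] at h
    rw [h]
    abel
  have hff : ∀ a b : Fin n, (u a : A) * u b = u b * u a := by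
    intro a b
    rw [hu a, hu b, brk _ _ (trf a) (trf b), hB1 a b, map_zero, add_zero]
  have hfH : ∀ a b : Fin n, (u a : A) * φ (single b.succ b.succ 1 - ((n : ℂ) + 1)⁻¹ • 1)
      = φ (single b.succ b.succ 1 - ((n : ℂ) + 1)⁻¹ • 1) * u a
        + (if a = b then (u a : A) else 0) := by
    intro a b
    rw [hu a, brk _ _ (trf a) (trH b), hB2 a b]
    split_ifs <;> simp
  have hHH : ∀ b : Fin n, φ (single b.succ b.succ 1 - ((n : ℂ) + 1)⁻¹ • 1)
        * φ (single i.succ i.succ 1 - ((n : ℂ) + 1)⁻¹ • 1)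
      = φ (single i.succ i.succ 1 - ((n : ℂ) + 1)⁻¹ • 1)
        * φ (single b.succ b.succ 1 - ((n : ℂ) + 1)⁻¹ • 1) := by
    intro b
    rw [brk _ _ (trH b) (trH i), hB4 b i, sub_self, map_zero, add_zero]
  have hfX : ∀ j : Fin n, (u i : A)
        * φ (single k.succ j.succ 1 - (if j = k then ((n : ℂ) + 1)⁻¹ else 0) • 1)
      = φ (single k.succ j.succ 1 - (if j = k then ((n : ℂ) + 1)⁻¹ else 0) • 1) * u i
        + (if i = k then (u j : A) else 0) := by
    intro j
    rw [hu i, hu j, brk _ _ (trf i) (trX j), hB3 k i j]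
    split_ifs <;> simp
  have hXH : ∀ j : Fin n, φ (single k.succ j.succ 1 - (if j = k then ((n : ℂ) + 1)⁻¹ else 0) • 1)
        * φ (single i.succ i.succ 1 - ((n : ℂ) + 1)⁻¹ • 1)
      = φ (single i.succ i.succ 1 - ((n : ℂ) + 1)⁻¹ • 1)
          * φ (single k.succ j.succ 1 - (if j = k then ((n : ℂ) + 1)⁻¹ else 0) • 1)
        + ((if j = i then
              φ (single k.succ j.succ 1 - (if j = k then ((n : ℂ) + 1)⁻¹ else 0) • 1)
            else 0)
          - (if k = i then
              φ (single k.succ j.succ 1 - (if j = k then ((n : ℂ) + 1)⁻¹ else 0) • 1)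
            else 0)) := by
    intro j
    rw [brk _ _ (trX j) (trH i), hB6 k i j, map_sub]
    congr 1
    congr 1 <;> split_ifs <;> simp
  have hgH : φ (single k.succ 0 1)
        * φ (single i.succ i.succ 1 - ((n : ℂ) + 1)⁻¹ • 1)
      = φ (single i.succ i.succ 1 - ((n : ℂ) + 1)⁻¹ • 1)
          * φ (single k.succ 0 1)
        - (if k = i then φ (single k.succ 0 1) else 0) := by
    rw [brk _ _ trg (trH i), hB5 k i, map_neg]
    split_ifs <;> simp [sub_eq_add_neg]
  have hfg : (u i : A) * φ (single k.succ 0 1)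
      = φ (single k.succ 0 1) * u i
        - (if i = k then
            ∑ j : Fin n, φ (single j.succ j.succ 1 - ((n : ℂ) + 1)⁻¹ • 1)
          else 0)
        - φ (single k.succ i.succ 1 - (if i = k then ((n : ℂ) + 1)⁻¹ else 0) • 1) := by
    rw [hu i, brk _ _ (trf i) trg, hB7 k i, map_sub, map_neg, sub_sub]
    split_ifs <;> simp [map_sum, sub_eq_add_neg, neg_add] <;> abel
  simp only [← hu]
  exact statement7_aux u
    (fun j => φ (single j.succ j.succ 1 - ((n : ℂ) + 1)⁻¹ • 1))
    (fun j => φ (single k.succ j.succ 1 - (if j = k then ((n : ℂ) + 1)⁻¹ else 0) • 1))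
    (φ (single k.succ 0 1)) k i hff hfH hHH hfX hXH hgH hfg
end

section
/- The set {e_{ij} − h_i : 1 ≤ i ≠ j ≤ n} ∪ {e_{k0} : 1 ≤ k ≤ n} is a basis of the centralizer in sl_{n+1} of the nilpotent element e = e_{10} + e_{20} + ⋯ + e_{n0}; in particular this centralizer has dimension n² − n + n = n². -/
open Matrix

namespace Statement10Aux

variable (n : ℕ)

noncomputable def eMat : Matrix (Fin (n+1)) (Fin (n+1)) ℂ :=
  ∑ k : Fin n, single k.succ (0 : Fin (n+1)) (1 : ℂ)

noncomputable def gMat (i j : Fin n) : Matrix (Fin (n+1)) (Fin (n+1)) ℂ :=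
  single i.succ j.succ (1 : ℂ)
    - (single i.succ i.succ 1 - ((n : ℂ) + 1)⁻¹ • 1)

noncomputable def vfam : ({p : Fin n × Fin n // p.1 ≠ p.2} ⊕ Fin n) → Matrix (Fin (n+1)) (Fin (n+1)) ℂ :=
  Sum.elim
    (fun p => single p.1.1.succ p.1.2.succ (1 : ℂ)
        - (single p.1.1.succ p.1.1.succ 1 - ((n : ℂ) + 1)⁻¹ • 1))
    (fun k => single k.succ (0 : Fin (n + 1)) (1 : ℂ))

noncomputable def Mmat (A : Fin n × Fin n → ℂ) (B : Fin n → ℂ) :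
    Matrix (Fin (n+1)) (Fin (n+1)) ℂ :=
  (∑ i : Fin n, ∑ j : Fin n, (if i = j then (0:ℂ) else A (i, j)) • gMat n i j)
    + ∑ k : Fin n, B k • single k.succ (0 : Fin (n+1)) (1 : ℂ)

variable {n}

lemma zero_ne_succ (k : Fin n) : ¬((0 : Fin (n+1)) = k.succ) :=
  (Fin.succ_ne_zero k).symm

lemma std_apply (i j : Fin (n+1)) (c : ℂ) (a b : Fin (n+1)) :
    single i j c a b = if i = a ∧ j = b then c else 0 := rfl

lemma gMat_apply (i j : Fin n) (a b : Fin (n+1)) :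
    gMat n i j a b = (if i.succ = a ∧ j.succ = b then (1:ℂ) else 0)
      - (if i.succ = a ∧ i.succ = b then 1 else 0)
      + ((n : ℂ) + 1)⁻¹ * (if a = b then 1 else 0) := by
  simp only [gMat, Matrix.sub_apply, Matrix.smul_apply, Matrix.one_apply, std_apply,
    smul_eq_mul]
  ring

lemma Mmat_apply (A : Fin n × Fin n → ℂ) (B : Fin n → ℂ) (a b : Fin (n+1)) :
    Mmat n A B a b =
      (∑ i : Fin n, ∑ j : Fin n, (if i = j then (0:ℂ) else A (i, j)) * gMat n i j a b)
      + ∑ k : Fin n, B k * (if k.succ = a ∧ (0 : Fin (n+1)) = b then (1:ℂ) else 0) := by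
  simp only [Mmat, Matrix.add_apply, Matrix.sum_apply, Matrix.smul_apply, smul_eq_mul,
    std_apply]

lemma sum_vfam (c : ({p : Fin n × Fin n // p.1 ≠ p.2} ⊕ Fin n) → ℂ) :
    ∑ s, c s • vfam n s =
      Mmat n (fun q => if h : q.1 = q.2 then 0 else c (Sum.inl ⟨q, h⟩))
        (fun k => c (Sum.inr k)) := by
  rw [Fintype.sum_sum_type, Mmat]
  congr 1
  have h1 : ∀ p : {p : Fin n × Fin n // p.1 ≠ p.2},
      c (Sum.inl p) • vfam n (Sum.inl p)
        = (fun q : Fin n × Fin n => (if h : q.1 = q.2 then (0:ℂ)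
            else c (Sum.inl ⟨q, h⟩)) • gMat n q.1 q.2) p.1 := by
    intro p
    simp only [vfam, Sum.elim_inl, gMat, dif_neg p.2]
  rw [Finset.sum_congr rfl fun p _ => h1 p,
    ← Finset.sum_subtype (Finset.univ.filter fun q : Fin n × Fin n => q.1 ≠ q.2)
      (by simp) (fun q : Fin n × Fin n => (if h : q.1 = q.2 then (0:ℂ)
            else c (Sum.inl ⟨q, h⟩)) • gMat n q.1 q.2),
    Finset.sum_filter]
  rw [← Fintype.sum_prod_type']
  refine Finset.sum_congr rfl fun q _ => ?_
  by_cases h : q.1 = q.2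
  · simp [h]
  · simp [h]

noncomputable def Ssum (A : Fin n × Fin n → ℂ) : ℂ :=
  ∑ i : Fin n, ∑ j : Fin n, (if i = j then (0:ℂ) else A (i, j))

lemma Mmat_succ_zero (A : Fin n × Fin n → ℂ) (B : Fin n → ℂ) (k : Fin n) :
    Mmat n A B k.succ 0 = B k := by
  rw [Mmat_apply]
  have h1 : ∀ i j : Fin n, gMat n i j k.succ 0 = 0 := by
    intro i j
    simp [gMat_apply, Fin.succ_ne_zero, zero_ne_succ]
  simp only [h1, mul_zero, ite_self, Finset.sum_const_zero, zero_add]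
  rw [Finset.sum_eq_single k]
  · simp
  · intro k' _ hk'
    simp [Fin.succ_inj, hk']
  · simp

lemma Mmat_zero_succ (A : Fin n × Fin n → ℂ) (B : Fin n → ℂ) (j : Fin n) :
    Mmat n A B 0 j.succ = 0 := by
  rw [Mmat_apply]
  have h1 : ∀ i' j' : Fin n, gMat n i' j' 0 j.succ = 0 := by
    intro i' j'
    simp [gMat_apply, Fin.succ_ne_zero, zero_ne_succ]
  simp [h1, Fin.succ_ne_zero, zero_ne_succ]

lemma Mmat_zero_zero (A : Fin n × Fin n → ℂ) (B : Fin n → ℂ) :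
    Mmat n A B 0 0 = ((n : ℂ) + 1)⁻¹ * Ssum A := by
  rw [Mmat_apply]
  have h1 : ∀ i' j' : Fin n, gMat n i' j' 0 0 = ((n : ℂ) + 1)⁻¹ := by
    intro i' j'
    simp [gMat_apply, Fin.succ_ne_zero, zero_ne_succ]
  simp only [h1, (Fin.succ_ne_zero _), false_and, if_false, mul_zero,
    Finset.sum_const_zero, add_zero, Ssum]
  rw [Finset.mul_sum]
  refine Finset.sum_congr rfl fun i _ => ?_
  rw [Finset.mul_sum]
  refine Finset.sum_congr rfl fun j _ => ?_
  ring

lemma Mmat_succ_succ (A : Fin n × Fin n → ℂ) (B : Fin n → ℂ) (i j : Fin n) (hij : i ≠ j) :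
    Mmat n A B i.succ j.succ = A (i, j) := by
  rw [Mmat_apply]
  have h2 : ∑ k : Fin n, B k * (if k.succ = i.succ ∧ (0 : Fin (n+1)) = j.succ then (1:ℂ) else 0)
      = 0 := by
    simp [(Fin.succ_ne_zero j).symm]
  rw [h2, add_zero, Finset.sum_eq_single i]
  · rw [Finset.sum_eq_single j]
    · have : gMat n i j i.succ j.succ = 1 := by
        simp [gMat_apply, hij, fun h : i = j => hij h,
          (Fin.succ_inj (a := i) (b := j)), Fin.succ_inj]
      rw [this, if_neg hij, mul_one]
    · intro j' _ hj'
      have : gMat n i j' i.succ j.succ = 0 := by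
        simp [gMat_apply, Fin.succ_inj, hj', hij, fun h : i = j => hij h]
      simp [this]
    · simp
  · intro i' _ hi'
    refine Finset.sum_eq_zero fun j' _ => ?_
    have : gMat n i' j' i.succ j.succ = 0 := by
      simp [gMat_apply, Fin.succ_inj, hi', fun h : i' = i => hi' h, hij,
        fun h : i = j => hij h]
    simp [this]
  · simp

lemma Mmat_diag (A : Fin n × Fin n → ℂ) (B : Fin n → ℂ) (i : Fin n) :
    Mmat n A B i.succ i.succ = ((n : ℂ) + 1)⁻¹ * Ssum A
      - ∑ j : Fin n, (if i = j then (0:ℂ) else A (i, j)) := by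
  rw [Mmat_apply]
  have h2 : ∑ k : Fin n, B k * (if k.succ = i.succ ∧ (0 : Fin (n+1)) = i.succ then (1:ℂ) else 0)
      = 0 := by
    simp [zero_ne_succ]
  rw [h2, add_zero]
  have h1 : ∀ i' j' : Fin n, gMat n i' j' i.succ i.succ =
      ((n : ℂ) + 1)⁻¹ - (if i' = i then 1 else 0) + (if i' = i ∧ j' = i then 1 else 0) := by
    intro i' j'
    rw [gMat_apply]
    simp only [Fin.succ_inj, and_self, eq_self_iff_true, if_true, mul_one]
    ring
  simp only [h1]
  have key : ∀ i' : Fin n, ∑ j' : Fin n, (if i' = j' then (0:ℂ) else A (i', j')) *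
      (((n : ℂ) + 1)⁻¹ - (if i' = i then 1 else 0) + (if i' = i ∧ j' = i then 1 else 0))
      = (∑ j' : Fin n, (if i' = j' then (0:ℂ) else A (i', j')) * ((n : ℂ) + 1)⁻¹)
        - (if i' = i then ∑ j' : Fin n, (if i' = j' then (0:ℂ) else A (i', j')) else 0) := by
    intro i'
    by_cases h : i' = i
    · subst h
      simp only [eq_self_iff_true, if_true, true_and]
      have hpt : ∀ j' : Fin n, (if i' = j' then (0:ℂ) else A (i', j')) *
          (((n : ℂ) + 1)⁻¹ - 1 + (if j' = i' then (1:ℂ) else 0))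
          = (if i' = j' then (0:ℂ) else A (i', j')) * ((n : ℂ) + 1)⁻¹
            - (if i' = j' then (0:ℂ) else A (i', j')) := by
        intro j'
        by_cases h' : j' = i'
        · simp [h'.symm]
        · simp only [if_neg h', add_zero]
          ring
      rw [Finset.sum_congr rfl fun j' _ => hpt j', Finset.sum_sub_distrib]
    · have hz : ∀ j' : Fin n, (if i' = i ∧ j' = i then (1:ℂ) else 0) = 0 :=
        fun j' => if_neg (fun hh => h hh.1)
      simp only [hz, if_neg h, sub_zero, add_zero]
  rw [Finset.sum_congr rfl fun i' _ => key i', Finset.sum_sub_distrib]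
  congr 1
  · rw [Ssum, Finset.mul_sum]
    refine Finset.sum_congr rfl fun i' _ => ?_
    rw [Finset.mul_sum]
    exact Finset.sum_congr rfl fun j' _ => (mul_comm _ _)
  · rw [Finset.sum_ite_eq' Finset.univ i
      (fun i' => ∑ j' : Fin n, (if i' = j' then (0:ℂ) else A (i', j')))]
    simp


lemma e_mul_apply (x : Matrix (Fin (n+1)) (Fin (n+1)) ℂ) (a b : Fin (n+1)) :
    (eMat n * x) a b = if a = 0 then 0 else x 0 b := by
  rw [eMat, Finset.sum_mul, Matrix.sum_apply]
  rcases Fin.eq_zero_or_eq_succ a with rfl | ⟨i, rfl⟩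
  · rw [if_pos rfl]
    exact Finset.sum_eq_zero fun k _ => by simp [zero_ne_succ]
  · rw [if_neg (Fin.succ_ne_zero i), Finset.sum_eq_single i]
    · simp
    · intro k _ hk
      have : i.succ ≠ k.succ := by simp [Fin.succ_inj, Ne.symm hk]
      simp [this]
    · simp

lemma mul_e_apply (x : Matrix (Fin (n+1)) (Fin (n+1)) ℂ) (a b : Fin (n+1)) :
    (x * eMat n) a b = if b = 0 then ∑ k : Fin n, x a k.succ else 0 := by
  rw [eMat, Finset.mul_sum, Matrix.sum_apply]
  rcases Fin.eq_zero_or_eq_succ b with rfl | ⟨j, rfl⟩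
  · rw [if_pos rfl]
    exact Finset.sum_congr rfl fun k _ => by simp
  · rw [if_neg (Fin.succ_ne_zero j)]
    exact Finset.sum_eq_zero fun k _ => by simp [Fin.succ_ne_zero]

lemma trace_vfam (s : {p : Fin n × Fin n // p.1 ≠ p.2} ⊕ Fin n) :
    Matrix.trace (vfam n s) = 0 := by
  have hn : ((n : ℂ) + 1) ≠ 0 := Nat.cast_add_one_ne_zero n
  cases s with
  | inl p =>
    have h1 : p.1.2.succ ≠ p.1.1.succ := by
      simp [Fin.succ_inj, Ne.symm p.2]
    simp only [vfam, Sum.elim_inl, Matrix.trace_sub, Matrix.trace_smul,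
      Matrix.trace_one, Matrix.trace_single_eq_of_ne _ _ (1 : ℂ) h1.symm,
      Matrix.trace_single_eq_same, Fintype.card_fin, smul_eq_mul]
    push_cast
    simp [hn]
  | inr k =>
    have h1 : (0 : Fin (n+1)) ≠ k.succ := zero_ne_succ k
    simp only [vfam, Sum.elim_inr, Matrix.trace_single_eq_of_ne _ _ (1 : ℂ) h1.symm]

lemma comm_vfam (s : {p : Fin n × Fin n // p.1 ≠ p.2} ⊕ Fin n) :
    eMat n * vfam n s = vfam n s * eMat n := by
  cases s with
  | inl p =>
    have hvg : vfam n (Sum.inl p) = gMat n p.1.1 p.1.2 := rfl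
    rw [hvg]
    ext a b
    rw [e_mul_apply, mul_e_apply]
    rcases Fin.eq_zero_or_eq_succ a with rfl | ⟨m, rfl⟩ <;>
      rcases Fin.eq_zero_or_eq_succ b with rfl | ⟨j', rfl⟩
    · simp [gMat_apply, Fin.succ_ne_zero, zero_ne_succ]
    · simp [gMat_apply, Fin.succ_ne_zero, zero_ne_succ]
    · rw [if_neg (Fin.succ_ne_zero m), if_pos rfl]
      have hg : ∀ k : Fin n, gMat n p.1.1 p.1.2 m.succ k.succ =
          (if p.1.1 = m ∧ p.1.2 = k then (1:ℂ) else 0)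
            - (if p.1.1 = m ∧ p.1.1 = k then 1 else 0)
            + ((n : ℂ) + 1)⁻¹ * (if m = k then 1 else 0) := by
        intro k
        simp [gMat_apply, Fin.succ_inj]
      have hg0 : gMat n p.1.1 p.1.2 0 0 = ((n : ℂ) + 1)⁻¹ := by
        simp [gMat_apply, Fin.succ_ne_zero, zero_ne_succ]
      rw [hg0]
      simp only [hg, Finset.sum_add_distrib, Finset.sum_sub_distrib, ite_and]
      by_cases h : p.1.1 = m
      · simp [h, Finset.mul_sum, mul_ite, Finset.sum_ite_eq]
      · simp [h, Finset.mul_sum, mul_ite, Finset.sum_ite_eq]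
    · rw [if_neg (Fin.succ_ne_zero m), if_neg (Fin.succ_ne_zero j')]
      simp [gMat_apply, Fin.succ_ne_zero, zero_ne_succ]
  | inr k =>
    have hvg : vfam n (Sum.inr k) = single k.succ (0 : Fin (n+1)) (1:ℂ) := rfl
    rw [hvg]
    ext a b
    rw [e_mul_apply, mul_e_apply]
    rcases Fin.eq_zero_or_eq_succ a with rfl | ⟨m, rfl⟩ <;>
      rcases Fin.eq_zero_or_eq_succ b with rfl | ⟨j', rfl⟩ <;>
      simp [std_apply, Fin.succ_ne_zero, zero_ne_succ]



lemma Mmat_congr (A A' : Fin n × Fin n → ℂ) (B : Fin n → ℂ)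
    (h : ∀ q : Fin n × Fin n, q.1 ≠ q.2 → A q = A' q) : Mmat n A B = Mmat n A' B := by
  rw [Mmat, Mmat]
  congr 1
  refine Finset.sum_congr rfl fun i _ => Finset.sum_congr rfl fun j _ => ?_
  by_cases hij : i = j
  · simp [hij]
  · rw [if_neg hij, if_neg hij, h (i, j) hij]

lemma indep (n : ℕ) : LinearIndependent ℂ (vfam n) := by
  rw [Fintype.linearIndependent_iff]
  intro c hc
  rw [sum_vfam] at hc
  intro s
  cases s with
  | inr k =>
    have h2 := Mmat_succ_zero
      (fun q : Fin n × Fin n => if h : q.1 = q.2 then (0:ℂ) else c (Sum.inl ⟨q, h⟩))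
      (fun k => c (Sum.inr k)) k
    rw [hc] at h2
    simpa using h2.symm
  | inl p =>
    have h2 := Mmat_succ_succ
      (fun q : Fin n × Fin n => if h : q.1 = q.2 then (0:ℂ) else c (Sum.inl ⟨q, h⟩))
      (fun k => c (Sum.inr k)) p.1.1 p.1.2 p.2
    rw [hc] at h2
    simp only [Matrix.zero_apply] at h2
    rw [dif_neg p.2] at h2
    exact h2.symm

lemma span_eq (n : ℕ) :
    Submodule.span ℂ (Set.range (vfam n)) =
      (LinearMap.ker (traceLinearMap (Fin (n + 1)) ℂ ℂ) ⊓
        LinearMap.ker (LinearMap.mulLeft ℂ (eMat n) - LinearMap.mulRight ℂ (eMat n))) := by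
  apply le_antisymm
  · rw [Submodule.span_le]
    rintro y ⟨s, rfl⟩
    refine Submodule.mem_inf.2 ⟨?_, ?_⟩
    · rw [LinearMap.mem_ker]
      exact trace_vfam s
    · rw [LinearMap.mem_ker, LinearMap.sub_apply, LinearMap.mulLeft_apply,
        LinearMap.mulRight_apply, sub_eq_zero]
      exact comm_vfam s
  · intro x hx
    obtain ⟨htr', hcomm'⟩ := Submodule.mem_inf.1 hx
    rw [LinearMap.mem_ker] at htr'
    rw [LinearMap.mem_ker, LinearMap.sub_apply, LinearMap.mulLeft_apply,
      LinearMap.mulRight_apply, sub_eq_zero] at hcomm'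
    have hentry : ∀ a b : Fin (n+1), (eMat n * x) a b = (x * eMat n) a b :=
      fun a b => congrFun (congrFun hcomm' a) b
    have h0 : ∀ j : Fin n, x 0 j.succ = 0 := by
      intro j
      have h := hentry j.succ j.succ
      rw [e_mul_apply, mul_e_apply, if_neg (Fin.succ_ne_zero j),
        if_neg (Fin.succ_ne_zero j)] at h
      exact h
    have hrow : ∀ i : Fin n, ∑ k : Fin n, x i.succ k.succ = x 0 0 := by
      intro i
      have h := hentry i.succ 0
      rw [e_mul_apply, mul_e_apply, if_neg (Fin.succ_ne_zero i), if_pos rfl] at h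
      exact h.symm
    have htr : x 0 0 + ∑ i : Fin n, x i.succ i.succ = 0 := by
      have : Matrix.trace x = 0 := htr'
      rwa [Matrix.trace, Fin.sum_univ_succ] at this
    have hdiag : ∑ i : Fin n, x i.succ i.succ = -x 0 0 :=
      eq_neg_of_add_eq_zero_right htr
    set A : Fin n × Fin n → ℂ := fun q => x q.1.succ q.2.succ with hA
    set B : Fin n → ℂ := fun k => x k.succ 0 with hB
    have hinner : ∀ i : Fin n, ∑ j : Fin n, (if i = j then (0:ℂ) else A (i, j))
        = x 0 0 - x i.succ i.succ := by
      intro i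
      have hpt : ∀ j : Fin n, (if i = j then (0:ℂ) else A (i, j))
          = x i.succ j.succ - (if i = j then x i.succ j.succ else 0) := by
        intro j
        by_cases h : i = j <;> simp [h, hA]
      rw [Finset.sum_congr rfl fun j _ => hpt j, Finset.sum_sub_distrib,
        Finset.sum_ite_eq Finset.univ i, if_pos (Finset.mem_univ i), hrow i]
    have hS : Ssum A = ((n : ℂ) + 1) * x 0 0 := by
      rw [Ssum, Finset.sum_congr rfl fun i _ => hinner i, Finset.sum_sub_distrib,
        hdiag, Finset.sum_const, Finset.card_univ, Fintype.card_fin, nsmul_eq_mul]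
      ring
    have hn : ((n : ℂ) + 1) ≠ 0 := Nat.cast_add_one_ne_zero n
    have hxM : Mmat n A B = x := by
      ext a b
      rcases Fin.eq_zero_or_eq_succ a with rfl | ⟨i, rfl⟩ <;>
        rcases Fin.eq_zero_or_eq_succ b with rfl | ⟨j, rfl⟩
      · rw [Mmat_zero_zero, hS, ← mul_assoc, inv_mul_cancel₀ hn, one_mul]
      · rw [Mmat_zero_succ, h0 j]
      · rw [Mmat_succ_zero]
      · by_cases hij : i = j
        · subst hij
          rw [Mmat_diag, hS, ← mul_assoc, inv_mul_cancel₀ hn, one_mul, hinner i]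
          ring
        · rw [Mmat_succ_succ _ _ _ _ hij]
    have hxsum : x = ∑ s, (Sum.elim (fun p : {p : Fin n × Fin n // p.1 ≠ p.2} =>
        x p.1.1.succ p.1.2.succ) (fun k : Fin n => x k.succ 0) : _ → ℂ) s • vfam n s := by
      rw [sum_vfam, Mmat_congr _ A _ (fun q hq => by simp [dif_neg hq, hA])]
      exact hxM.symm
    rw [hxsum]
    exact Submodule.sum_mem _ fun s _ =>
      Submodule.smul_mem _ _ (Submodule.subset_span ⟨s, rfl⟩)

lemma card_eq (n : ℕ) :
    Fintype.card ({p : Fin n × Fin n // p.1 ≠ p.2} ⊕ Fin n) = n ^ 2 := by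
  have h1 : Fintype.card {p : Fin n × Fin n // p.1 = p.2} = n := by
    rw [Fintype.card_congr
      (⟨fun p => p.1.1, fun i => ⟨(i, i), rfl⟩,
        fun p => Subtype.ext (Prod.ext rfl p.2), fun i => rfl⟩ :
        {p : Fin n × Fin n // p.1 = p.2} ≃ Fin n), Fintype.card_fin]
  have h2 : Fintype.card {p : Fin n × Fin n // p.1 ≠ p.2} = n * n - n := by
    have := Fintype.card_subtype_compl (fun p : Fin n × Fin n => p.1 = p.2)
    simp only [h1, Fintype.card_prod, Fintype.card_fin] at this
    convert this using 2
  have hle : n ≤ n * n := by nlinarith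
  rw [Fintype.card_sum, h2, Fintype.card_fin, Nat.sub_add_cancel hle, sq]


end Statement10Aux

/-- The family `{e_{ij} - h_i : 1 ≤ i ≠ j ≤ n} ∪ {e_{k0} : 1 ≤ k ≤ n}` is a
basis of the centralizer in `sl_{n+1}` of `e = e_{10} + ⋯ + e_{n0}`: it is linearly
independent and spans `{x : trace x = 0, [x,e] = 0}`; in particular that centralizer has
dimension `n²`. -/
theorem statement10 (n : ℕ) :
    LinearIndependent ℂ
      (Sum.elim
        (fun p : {p : Fin n × Fin n // p.1 ≠ p.2} =>
          single p.1.1.succ p.1.2.succ (1 : ℂ)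
            - (single p.1.1.succ p.1.1.succ 1 - ((n : ℂ) + 1)⁻¹ • 1))
        (fun k : Fin n => single k.succ (0 : Fin (n + 1)) (1 : ℂ))) ∧
    Submodule.span ℂ (Set.range
      (Sum.elim
        (fun p : {p : Fin n × Fin n // p.1 ≠ p.2} =>
          single p.1.1.succ p.1.2.succ (1 : ℂ)
            - (single p.1.1.succ p.1.1.succ 1 - ((n : ℂ) + 1)⁻¹ • 1))
        (fun k : Fin n => single k.succ (0 : Fin (n + 1)) (1 : ℂ)))) =
      (LinearMap.ker (traceLinearMap (Fin (n + 1)) ℂ ℂ) ⊓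
        LinearMap.ker (LinearMap.mulLeft ℂ (∑ k : Fin n, single k.succ (0 : Fin (n + 1)) (1 : ℂ))
          - LinearMap.mulRight ℂ (∑ k : Fin n, single k.succ (0 : Fin (n + 1)) (1 : ℂ)))) ∧
    Module.finrank ℂ
      ↥(LinearMap.ker (traceLinearMap (Fin (n + 1)) ℂ ℂ) ⊓
        LinearMap.ker (LinearMap.mulLeft ℂ (∑ k : Fin n, single k.succ (0 : Fin (n + 1)) (1 : ℂ))
          - LinearMap.mulRight ℂ (∑ k : Fin n, single k.succ (0 : Fin (n + 1)) (1 : ℂ)))) = n ^ 2 := by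
  refine ⟨Statement10Aux.indep n, Statement10Aux.span_eq n, ?_⟩
  have h1 : Module.finrank ℂ
      ↥(LinearMap.ker (traceLinearMap (Fin (n + 1)) ℂ ℂ) ⊓
        LinearMap.ker (LinearMap.mulLeft ℂ (Statement10Aux.eMat n)
          - LinearMap.mulRight ℂ (Statement10Aux.eMat n))) = n ^ 2 := by
    rw [← Statement10Aux.span_eq n, finrank_span_eq_card (Statement10Aux.indep n),
      Statement10Aux.card_eq n]
  exact h1
end

section
/- Let Ω = ℂ[d_1,…,d_n] be the D_n-module on which ∂/∂x_i · f(d) = −f(d + e_i) and x_i · f(d) = −f(d − e_i) d_i. Then Ω is a simple module over the Weyl algebra D_n, isomorphic to D_n / Σ_{i=1}^n D_n(∂/∂x_i + 1). -/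
open MvPolynomial

/-- Generators of the Weyl algebra `D_n`: `x_i` and `∂_i`. -/
inductive WGen (n : ℕ)
  | x (i : Fin n)
  | d (i : Fin n)

/-- The defining relations of the Weyl algebra `D_n`: the `x_i` commute, the `∂_i` commute,
and `∂_i x_j - x_j ∂_i = δ_{ij}`. -/
inductive WRel (n : ℕ) : FreeAlgebra ℂ (WGen n) → FreeAlgebra ℂ (WGen n) → Prop
  | xx (i j : Fin n) : WRel n (FreeAlgebra.ι ℂ (WGen.x i) * FreeAlgebra.ι ℂ (WGen.x j))
      (FreeAlgebra.ι ℂ (WGen.x j) * FreeAlgebra.ι ℂ (WGen.x i))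
  | dd (i j : Fin n) : WRel n (FreeAlgebra.ι ℂ (WGen.d i) * FreeAlgebra.ι ℂ (WGen.d j))
      (FreeAlgebra.ι ℂ (WGen.d j) * FreeAlgebra.ι ℂ (WGen.d i))
  | dx (i j : Fin n) : WRel n (FreeAlgebra.ι ℂ (WGen.d i) * FreeAlgebra.ι ℂ (WGen.x j))
      (FreeAlgebra.ι ℂ (WGen.x j) * FreeAlgebra.ι ℂ (WGen.d i) + if i = j then 1 else 0)

/-- The Weyl algebra `D_n`, presented by generators and relations. -/
abbrev Weyl (n : ℕ) := RingQuot (WRel n)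

/-- The shift operator `f(d) ↦ f(d + c e_i)` on `Ω = ℂ[d_1,…,d_n]`. -/
noncomputable def shiftOp (n : ℕ) (c : ℂ) (i : Fin n) :
    Module.End ℂ (MvPolynomial (Fin n) ℂ) :=
  (MvPolynomial.aeval fun t => MvPolynomial.X t + if t = i then MvPolynomial.C c else 0).toLinearMap

lemma shiftOp_mul (n : ℕ) (c : ℂ) (i : Fin n) (p q : MvPolynomial (Fin n) ℂ) :
    shiftOp n c i (p * q) = shiftOp n c i p * shiftOp n c i q := by
  simp [shiftOp]

lemma shiftOp_X (n : ℕ) (c : ℂ) (i t : Fin n) :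
    shiftOp n c i (X t) = X t + if t = i then C c else 0 := by
  simp [shiftOp]

lemma shiftOp_C (n : ℕ) (c : ℂ) (i : Fin n) (a : ℂ) :
    shiftOp n c i (C a) = C a := by
  simp [shiftOp]

lemma shiftOp_comm (n : ℕ) (c c' : ℂ) (i j : Fin n) (p : MvPolynomial (Fin n) ℂ) :
    shiftOp n c i (shiftOp n c' j p) = shiftOp n c' j (shiftOp n c i p) := by
  induction p using MvPolynomial.induction_on with
  | C a => simp [shiftOp_C]
  | add p q hp hq => simp [map_add, hp, hq]
  | mul_X p t hp =>
      simp only [shiftOp_mul, shiftOp_X, hp, map_add,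
        apply_ite (shiftOp n c i), apply_ite (shiftOp n c' j), shiftOp_C, map_zero]
      ring

lemma shiftOp_add (n : ℕ) (c c' : ℂ) (i : Fin n) (p : MvPolynomial (Fin n) ℂ) :
    shiftOp n c i (shiftOp n c' i p) = shiftOp n (c + c') i p := by
  induction p using MvPolynomial.induction_on with
  | C a => simp [shiftOp_C]
  | add p q hp hq => simp [map_add, hp, hq]
  | mul_X p t hp =>
      simp only [shiftOp_mul, shiftOp_X, hp, map_add,
        apply_ite (shiftOp n c i), shiftOp_C, map_zero]
      split_ifs with h
      · ring
      · ring

lemma shiftOp_zero (n : ℕ) (i : Fin n) (p : MvPolynomial (Fin n) ℂ) :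
    shiftOp n 0 i p = p := by
  induction p using MvPolynomial.induction_on with
  | C a => simp [shiftOp_C]
  | add p q hp hq => simp [map_add, hp, hq]
  | mul_X p t hp => simp [shiftOp_mul, shiftOp_X, hp]

lemma shiftOp_cancel (n : ℕ) (c : ℂ) (i : Fin n) (p : MvPolynomial (Fin n) ℂ) :
    shiftOp n c i (shiftOp n (-c) i p) = p := by
  rw [shiftOp_add, add_neg_cancel, shiftOp_zero]

noncomputable def wf (n : ℕ) : WGen n → Module.End ℂ (MvPolynomial (Fin n) ℂ)
  | WGen.x i => -(LinearMap.mulLeft ℂ (X i) ∘ₗ shiftOp n (-1) i)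
  | WGen.d i => -(shiftOp n 1 i)

lemma wrel_preserved (n : ℕ) : ∀ ⦃a b : FreeAlgebra ℂ (WGen n)⦄, WRel n a b →
    FreeAlgebra.lift ℂ (wf n) a = FreeAlgebra.lift ℂ (wf n) b := by
  intro a b h
  induction h with
  | xx i j =>
      simp only [map_mul, FreeAlgebra.lift_ι_apply, wf]
      refine LinearMap.ext fun p => ?_
      simp only [Module.End.mul_apply, LinearMap.neg_apply, LinearMap.comp_apply,
        LinearMap.mulLeft_apply, map_neg, mul_neg, neg_neg]
      rw [shiftOp_mul, shiftOp_mul, shiftOp_X, shiftOp_X, shiftOp_comm]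
      split_ifs <;> simp_all <;> ring
  | dd i j =>
      simp only [map_mul, FreeAlgebra.lift_ι_apply, wf]
      refine LinearMap.ext fun p => ?_
      simp only [Module.End.mul_apply, LinearMap.neg_apply, map_neg, neg_neg]
      rw [shiftOp_comm]
  | dx i j =>
      simp only [map_mul, map_add, FreeAlgebra.lift_ι_apply, wf]
      by_cases hij : i = j
      · subst hij
        rw [if_pos rfl]
        refine LinearMap.ext fun p => ?_
        simp only [map_one, LinearMap.add_apply, Module.End.mul_apply, LinearMap.neg_apply,
          LinearMap.comp_apply, LinearMap.mulLeft_apply, map_neg, mul_neg, neg_neg,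
          Module.End.one_apply]
        rw [shiftOp_mul, shiftOp_X, shiftOp_cancel, shiftOp_add]
        rw [neg_add_cancel, shiftOp_zero]
        simp
        ring
      · rw [if_neg hij]
        refine LinearMap.ext fun p => ?_
        simp only [map_zero, LinearMap.add_apply, Module.End.mul_apply, LinearMap.neg_apply,
          LinearMap.comp_apply, LinearMap.mulLeft_apply, map_neg, mul_neg, neg_neg,
          LinearMap.zero_apply, add_zero]
        rw [shiftOp_mul, shiftOp_X, if_neg (fun h => hij h.symm), shiftOp_comm]
        ring

/-- The `D_n`-action on `Ω`: `x_i · f(d) = -f(d - e_i) d_i`, `∂_i · f(d) = -f(d + e_i)`. -/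
noncomputable def weylRep (n : ℕ) : Weyl n →ₐ[ℂ] Module.End ℂ (MvPolynomial (Fin n) ℂ) :=
  RingQuot.liftAlgHom ℂ ⟨FreeAlgebra.lift ℂ (wf n), wrel_preserved n⟩

/-- `Ω = ℂ[d_1,…,d_n]` as a module over the Weyl algebra `D_n`. -/
noncomputable instance weylModuleOmega (n : ℕ) : Module (Weyl n) (MvPolynomial (Fin n) ℂ) :=
  Module.compHom _ (weylRep n).toRingHom

namespace Statement14Aux

open MvPolynomial

variable {n : ℕ}

/-- The generator `x_i` in the Weyl algebra. -/
noncomputable abbrev xg (n : ℕ) (i : Fin n) : Weyl n :=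
  RingQuot.mkAlgHom ℂ (WRel n) (FreeAlgebra.ι ℂ (WGen.x i))

/-- The generator `∂_i` in the Weyl algebra. -/
noncomputable abbrev dg (n : ℕ) (i : Fin n) : Weyl n :=
  RingQuot.mkAlgHom ℂ (WRel n) (FreeAlgebra.ι ℂ (WGen.d i))

lemma xg_comm (i j : Fin n) : xg n i * xg n j = xg n j * xg n i := by
  simpa [map_mul] using RingQuot.mkAlgHom_rel ℂ (WRel.xx i j)

lemma dg_comm (i j : Fin n) : dg n i * dg n j = dg n j * dg n i := by
  simpa [map_mul] using RingQuot.mkAlgHom_rel ℂ (WRel.dd i j)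

lemma dx_rel (i j : Fin n) :
    dg n i * xg n j = xg n j * dg n i + if i = j then 1 else 0 := by
  have h := RingQuot.mkAlgHom_rel ℂ (WRel.dx i j)
  simp only [map_mul, map_add] at h
  rw [h]
  congr 1
  split_ifs <;> simp

lemma e_key (i j : Fin n) (h : i ≠ j) :
    xg n i * dg n i * (xg n j * dg n j) = xg n i * xg n j * (dg n i * dg n j) := by
  have h1 : dg n i * xg n j = xg n j * dg n i := by
    rw [dx_rel, if_neg h, add_zero]
  calc xg n i * dg n i * (xg n j * dg n j)
      = xg n i * (dg n i * xg n j) * dg n j := by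
        rw [mul_assoc, mul_assoc, mul_assoc, ← mul_assoc (dg n i)]
    _ = xg n i * (xg n j * dg n i) * dg n j := by rw [h1]
    _ = xg n i * xg n j * (dg n i * dg n j) := by
        rw [mul_assoc, mul_assoc, mul_assoc]

lemma e_comm (i j : Fin n) :
    xg n i * dg n i * (xg n j * dg n j) = xg n j * dg n j * (xg n i * dg n i) := by
  by_cases h : i = j
  · subst h; rfl
  · rw [e_key i j h, e_key j i (Ne.symm h), xg_comm j i, dg_comm j i]

/-- The commutative subalgebra generated by the elements `x_i ∂_i`. -/
noncomputable def Esub (n : ℕ) : Subalgebra ℂ (Weyl n) :=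
  Algebra.adjoin ℂ (Set.range fun i : Fin n => xg n i * dg n i)

noncomputable instance (n : ℕ) : CommRing (Esub n) :=
  Algebra.adjoinCommRingOfComm ℂ (by
    rintro a ⟨i, rfl⟩ b ⟨j, rfl⟩
    exact e_comm i j)

/-- The linear section `Ω → D_n` sending `d^a` to `∏ (x_i ∂_i)^{a_i}` (an algebra map into the
commutative subalgebra generated by the `x_i ∂_i`). -/
noncomputable def eta (n : ℕ) : MvPolynomial (Fin n) ℂ →ₐ[ℂ] Weyl n :=
  (Esub n).val.comp (@aeval _ _ _ _ _ (Esub n).algebra fun i : Fin n =>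
    (⟨xg n i * dg n i, Algebra.subset_adjoin (Set.mem_range_self i)⟩ : Esub n))

lemma eta_X (i : Fin n) : eta n (X i) = xg n i * dg n i := by
  simp only [eta, AlgHom.comp_apply]
  exact congrArg Subtype.val (@aeval_X _ _ _ _ _ (Esub n).algebra _ i)

lemma wsmul (w : Weyl n) (q : MvPolynomial (Fin n) ℂ) : w • q = weylRep n w q := rfl

lemma dg_smul (i : Fin n) (q : MvPolynomial (Fin n) ℂ) :
    dg n i • q = -(shiftOp n 1 i q) := by
  rw [wsmul]
  rw [weylRep, RingQuot.liftAlgHom_mkAlgHom_apply, FreeAlgebra.lift_ι_apply]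
  rfl

lemma xg_smul (i : Fin n) (q : MvPolynomial (Fin n) ℂ) :
    xg n i • q = -(X i * shiftOp n (-1) i q) := by
  rw [wsmul]
  rw [weylRep, RingQuot.liftAlgHom_mkAlgHom_apply, FreeAlgebra.lift_ι_apply]
  rfl

lemma e_smul (i : Fin n) (q : MvPolynomial (Fin n) ℂ) :
    (xg n i * dg n i) • q = X i * q := by
  have hc := shiftOp_cancel n (-1) i q
  rw [neg_neg] at hc
  rw [mul_smul, dg_smul, xg_smul, map_neg, hc]
  ring

lemma algebraMap_smul_C (a : ℂ) (q : MvPolynomial (Fin n) ℂ) :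
    (algebraMap ℂ (Weyl n) a) • q = C a * q := by
  rw [wsmul, AlgHom.commutes, Module.algebraMap_end_apply, smul_eq_C_mul]

lemma eta_smul (p q : MvPolynomial (Fin n) ℂ) : eta n p • q = p * q := by
  induction p using MvPolynomial.induction_on generalizing q with
  | C a => rw [← MvPolynomial.algebraMap_eq, AlgHom.commutes, algebraMap_smul_C,
      MvPolynomial.algebraMap_eq]
  | add p r hp hr => rw [map_add, add_smul, hp, hr, add_mul]
  | mul_X p t hp =>
      rw [map_mul, eta_X, mul_smul, e_smul, hp]
      ring

lemma dg_e (j t : Fin n) :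
    dg n j * (xg n t * dg n t) =
      (xg n t * dg n t + if t = j then 1 else 0) * dg n j := by
  rw [← mul_assoc, dx_rel, add_mul, mul_assoc, dg_comm j t, ← mul_assoc]
  by_cases h : j = t
  · subst h; simp only [if_pos rfl, one_mul]; noncomm_ring
  · rw [if_neg h, if_neg (Ne.symm h)]; simp

lemma xg_e (j t : Fin n) :
    xg n j * (xg n t * dg n t) =
      (xg n t * dg n t + if t = j then -1 else 0) * xg n j := by
  have h1 : xg n j * dg n t = dg n t * xg n j - (if t = j then 1 else 0) := by
    rw [dx_rel t j]; exact (add_sub_cancel_right _ _).symm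
  rw [← mul_assoc, xg_comm j t, mul_assoc, h1]
  by_cases h : t = j
  · subst h
    rw [if_pos rfl, if_pos rfl]
    noncomm_ring
    rw [mul_smul_comm, smul_mul_assoc, mul_one, one_mul]
  · rw [if_neg h, if_neg h]; simp [mul_assoc]

lemma eta_shift_X (j t : Fin n) (c : ℂ) :
    eta n (shiftOp n c j (X t)) = xg n t * dg n t + if t = j then algebraMap ℂ (Weyl n) c else 0 := by
  rw [shiftOp_X, map_add, eta_X]
  congr 1
  split_ifs
  · rw [← MvPolynomial.algebraMap_eq, AlgHom.commutes]
  · exact map_zero _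

lemma dg_eta (j : Fin n) (p : MvPolynomial (Fin n) ℂ) :
    dg n j * eta n p = eta n (shiftOp n 1 j p) * dg n j := by
  induction p using MvPolynomial.induction_on with
  | C a =>
      rw [shiftOp_C, ← MvPolynomial.algebraMap_eq, AlgHom.commutes, Algebra.commutes]
  | add p r hp hr => rw [map_add, mul_add, hp, hr, map_add, map_add, add_mul]
  | mul_X p t hp =>
      rw [map_mul, eta_X, ← mul_assoc, hp, mul_assoc, dg_e, ← mul_assoc,
        shiftOp_mul, map_mul, eta_shift_X]
      simp

lemma xg_eta (j : Fin n) (p : MvPolynomial (Fin n) ℂ) :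
    xg n j * eta n p = eta n (shiftOp n (-1) j p) * xg n j := by
  induction p using MvPolynomial.induction_on with
  | C a =>
      rw [shiftOp_C, ← MvPolynomial.algebraMap_eq, AlgHom.commutes, Algebra.commutes]
  | add p r hp hr => rw [map_add, mul_add, hp, hr, map_add, map_add, add_mul]
  | mul_X p t hp =>
      rw [map_mul, eta_X, ← mul_assoc, hp, mul_assoc, xg_e, ← mul_assoc,
        shiftOp_mul, map_mul, eta_shift_X]
      simp

/-- The left ideal generated by the `∂_i + 1`. -/
noncomputable def Isub (n : ℕ) : Submodule (Weyl n) (Weyl n) :=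
  Submodule.span (Weyl n)
    {w : Weyl n | ∃ i : Fin n,
      w = RingQuot.mkAlgHom ℂ (WRel n) (FreeAlgebra.ι ℂ (WGen.d i)) + 1}

lemma mul_gen_mem (w : Weyl n) (i : Fin n) : w * (dg n i + 1) ∈ Isub n := by
  have h : (dg n i + 1) ∈ Isub n := Submodule.subset_span ⟨i, rfl⟩
  simpa using (Isub n).smul_mem w h

lemma decompose (w : Weyl n) : ∃ p, w - eta n p ∈ Isub n := by
  set T : Submodule ℂ (Weyl n) :=
    LinearMap.range (eta n).toLinearMap ⊔ (Isub n).restrictScalars ℂ with hT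
  have hrange : ∀ p, eta n p ∈ T := fun p =>
    Submodule.mem_sup_left ⟨p, rfl⟩
  have hI : ∀ u, u ∈ Isub n → u ∈ T := fun u hu =>
    Submodule.mem_sup_right hu
  have hImul : ∀ (v u : Weyl n), u ∈ Isub n → v * u ∈ T := fun v u hu =>
    hI _ (by simpa using (Isub n).smul_mem v hu)
  have hxg : ∀ (j : Fin n) (t : Weyl n), t ∈ T → xg n j * t ∈ T := by
    intro j t ht
    rw [hT] at ht
    obtain ⟨r, hr, u, hu, rfl⟩ := Submodule.mem_sup.mp ht
    obtain ⟨p, rfl⟩ := hr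
    rw [mul_add]
    refine T.add_mem ?_ (hImul _ _ hu)
    have hxj : (xg n j : Weyl n) = xg n j * (dg n j + 1) - eta n (X j) := by
      rw [eta_X]; noncomm_ring
    rw [show (eta n).toLinearMap p = eta n p from rfl, xg_eta, hxj, mul_sub]
    refine T.sub_mem ?_ ?_
    · rw [← mul_assoc]
      exact hI _ (mul_gen_mem _ j)
    · rw [← map_mul]
      exact hrange _
  have hdg : ∀ (j : Fin n) (t : Weyl n), t ∈ T → dg n j * t ∈ T := by
    intro j t ht
    rw [hT] at ht
    obtain ⟨r, hr, u, hu, rfl⟩ := Submodule.mem_sup.mp ht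
    obtain ⟨p, rfl⟩ := hr
    rw [mul_add]
    refine T.add_mem ?_ (hImul _ _ hu)
    have key : dg n j * eta n p
        = eta n (shiftOp n 1 j p) * (dg n j + 1) - eta n (shiftOp n 1 j p) := by
      rw [dg_eta]; noncomm_ring
    show dg n j * eta n p ∈ T
    rw [key]
    exact T.sub_mem (hI _ (mul_gen_mem _ j)) (hrange _)
  have hmain : ∀ (f : FreeAlgebra ℂ (WGen n)) (t : Weyl n), t ∈ T →
      RingQuot.mkAlgHom ℂ (WRel n) f * t ∈ T := by
    intro f
    induction f using FreeAlgebra.induction with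
    | grade0 r =>
        intro t ht
        rw [AlgHom.commutes, ← Algebra.smul_def]
        exact T.smul_mem r ht
    | grade1 g =>
        cases g with
        | x i => exact hxg i
        | d i => exact hdg i
    | mul a b ha hb =>
        intro t ht
        rw [map_mul, mul_assoc]
        exact ha _ (hb _ ht)
    | add a b ha hb =>
        intro t ht
        rw [map_add, add_mul]
        exact T.add_mem (ha _ ht) (hb _ ht)
  have hw : w ∈ T := by
    obtain ⟨f, rfl⟩ := RingQuot.mkAlgHom_surjective ℂ (WRel n) w
    have h1 : (1 : Weyl n) ∈ T := by
      simpa using hrange 1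
    simpa using hmain f 1 h1
  rw [hT] at hw
  obtain ⟨r, hr, u, hu, hsum⟩ := Submodule.mem_sup.mp hw
  obtain ⟨p, rfl⟩ := hr
  exact ⟨p, by rw [← hsum]; simpa using hu⟩

/-- The evaluation map `w ↦ w • 1`. -/
noncomputable def phi (n : ℕ) : Weyl n →ₗ[Weyl n] MvPolynomial (Fin n) ℂ :=
  LinearMap.toSpanSingleton (Weyl n) _ 1

lemma phi_apply (w : Weyl n) : phi n w = w • (1 : MvPolynomial (Fin n) ℂ) := rfl

lemma phi_eta (p : MvPolynomial (Fin n) ℂ) : phi n (eta n p) = p := by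
  rw [phi_apply, eta_smul, mul_one]

lemma Isub_le_ker : Isub n ≤ LinearMap.ker (phi n) := by
  rw [Isub, Submodule.span_le]
  rintro w ⟨i, rfl⟩
  have : ((dg n i + 1) : Weyl n) • (1 : MvPolynomial (Fin n) ℂ) = 0 := by
    have h1 : shiftOp n 1 i (1 : MvPolynomial (Fin n) ℂ) = 1 := by simp [shiftOp]
    rw [add_smul, dg_smul, one_smul, h1, neg_add_cancel]
  simpa [LinearMap.mem_ker, phi_apply] using this

lemma ker_le_Isub : LinearMap.ker (phi n) ≤ Isub n := by
  intro w hw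
  rw [LinearMap.mem_ker] at hw
  obtain ⟨p, hp⟩ := decompose w
  have h0 : phi n (w - eta n p) = 0 := Isub_le_ker hp
  rw [map_sub, hw, phi_eta, zero_sub, neg_eq_zero] at h0
  subst h0
  simpa using hp

lemma shiftOp_eq_aeval (c : ℂ) (i : Fin n) (p : MvPolynomial (Fin n) ℂ) :
    shiftOp n c i p = aeval (fun t => X t + if t = i then C c else 0) p := rfl

lemma r_deg_aux (i : Fin n) (k : ℕ) :
    totalDegree ((X i + 1) ^ (k + 1) - X i ^ (k + 1) : MvPolynomial (Fin n) ℂ) ≤ k := by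
  induction k with
  | zero =>
      have h1 : ((X i + 1) ^ (0 + 1) - X i ^ (0 + 1) : MvPolynomial (Fin n) ℂ) = 1 := by
        ring
      rw [h1, totalDegree_one]
  | succ k ih =>
      have hXi1 : ((X i + 1 : MvPolynomial (Fin n) ℂ)).totalDegree ≤ 1 := by
        refine le_trans (totalDegree_add _ _) ?_
        simp [totalDegree_X, totalDegree_one]
      have hid : ((X i + 1) ^ (k + 2) - X i ^ (k + 2) : MvPolynomial (Fin n) ℂ)
          = ((X i + 1) ^ (k + 1) - X i ^ (k + 1)) * X i + (X i + 1) ^ (k + 1) := by ring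
      rw [hid]
      refine le_trans (totalDegree_add _ _) ?_
      have h1 : (((X i + 1) ^ (k + 1) - X i ^ (k + 1)) * X i :
          MvPolynomial (Fin n) ℂ).totalDegree ≤ k + 1 := by
        refine le_trans (totalDegree_mul _ _) ?_
        rw [totalDegree_X]
        omega
      have h2 : ((X i + 1 : MvPolynomial (Fin n) ℂ) ^ (k + 1)).totalDegree ≤ k + 1 := by
        refine le_trans (totalDegree_pow _ _) ?_
        calc (k + 1) * (X i + 1 : MvPolynomial (Fin n) ℂ).totalDegree
            ≤ (k + 1) * 1 := Nat.mul_le_mul_left _ hXi1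
          _ = k + 1 := mul_one _
      exact max_le h1 h2

lemma shift_monomial (i : Fin n) (a : Fin n →₀ ℕ) (c : ℂ) :
    shiftOp n 1 i (monomial a c) = monomial a c
      + monomial (a.erase i) c * ((X i + 1) ^ (a i) - X i ^ (a i)) := by
  have hfix : shiftOp n 1 i (monomial (a.erase i) c) = monomial (a.erase i) c := by
    rw [shiftOp_eq_aeval, monomial_eq, map_mul, aeval_C, MvPolynomial.algebraMap_eq]
    congr 1
    rw [map_finsuppProd]
    refine Finsupp.prod_congr ?_
    intro j hj
    have hji : j ≠ i := by
      rw [Finsupp.support_erase] at hj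
      exact (Finset.mem_erase.mp hj).1
    rw [map_pow, aeval_X, if_neg hji, add_zero]
  have hpow : shiftOp n 1 i ((X i : MvPolynomial (Fin n) ℂ) ^ (a i))
      = (X i + 1) ^ (a i) := by
    rw [shiftOp_eq_aeval, map_pow, aeval_X, if_pos rfl, C_1]
  have hsplit : monomial a c = monomial (a.erase i) c * (X i : MvPolynomial (Fin n) ℂ) ^ (a i) := by
    rw [X_pow_eq_monomial, monomial_mul, mul_one, Finsupp.erase_add_single]
  rw [hsplit, shiftOp_mul, hfix, hpow]
  ring

lemma shift_monomial_deg (i : Fin n) (a : Fin n →₀ ℕ) (c : ℂ) :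
    totalDegree (shiftOp n 1 i (monomial a c) - monomial a c)
      ≤ (a.sum fun _ e => e) - 1 := by
  rw [shift_monomial, add_sub_cancel_left]
  rcases Nat.eq_zero_or_pos (a i) with h0 | hpos
  · rw [h0]
    simp
  · obtain ⟨k, hk⟩ : ∃ k, a i = k + 1 := ⟨a i - 1, by omega⟩
    have hsum : ((a.erase i).sum fun _ e => e) + a i = a.sum fun _ e => e := by
      conv_rhs => rw [← Finsupp.erase_add_single i a]
      rw [Finsupp.sum_add_index' (fun _ => rfl) (fun _ _ _ => rfl),
        Finsupp.sum_single_index rfl]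
    have h1 : ((monomial (a.erase i)) c).totalDegree ≤ (a.erase i).sum fun _ e => e :=
      totalDegree_monomial_le _ _
    have h2 := r_deg_aux i k
    rw [hk]
    refine le_trans (totalDegree_mul _ _) ?_
    omega

lemma shift_sub_deg (i : Fin n) (f : MvPolynomial (Fin n) ℂ) :
    totalDegree (shiftOp n 1 i f - f) ≤ totalDegree f - 1 := by
  have hrepr : shiftOp n 1 i f - f
      = ∑ a ∈ f.support,
          (shiftOp n 1 i (monomial a (coeff a f)) - monomial a (coeff a f)) := by
    rw [Finset.sum_sub_distrib, ← map_sum, support_sum_monomial_coeff]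
  rw [hrepr]
  refine le_trans (totalDegree_finset_sum _ _) ?_
  refine Finset.sup_le ?_
  intro a ha
  refine le_trans (shift_monomial_deg i a _) ?_
  exact Nat.sub_le_sub_right (le_totalDegree ha) 1

lemma eval_aeval_poly (g : Fin n → Polynomial ℂ) (t : ℂ) (f : MvPolynomial (Fin n) ℂ) :
    Polynomial.eval t (aeval g f) = eval (fun j => Polynomial.eval t (g j)) f := by
  induction f using MvPolynomial.induction_on with
  | C a => simp
  | add p q hp hq => simp [hp, hq]
  | mul_X p s hp => simp [hp]

lemma eval_aeval_mv (g : Fin n → MvPolynomial (Fin n) ℂ) (x : Fin n → ℂ)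
    (f : MvPolynomial (Fin n) ℂ) :
    eval x (aeval g f) = eval (fun j => eval x (g j)) f := by
  induction f using MvPolynomial.induction_on with
  | C a => simp
  | add p q hp hq => simp only [map_add, hp, hq]
  | mul_X p s hp => simp only [map_mul, aeval_X, eval_X, hp]

lemma eval_shiftOp (i : Fin n) (f : MvPolynomial (Fin n) ℂ) (x : Fin n → ℂ) :
    eval x (shiftOp n 1 i f) = eval (fun j => x j + if j = i then 1 else 0) f := by
  rw [shiftOp_eq_aeval, eval_aeval_mv]
  have hfun : (fun j => eval x (X j + if j = i then C 1 else 0))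
      = fun j => x j + if j = i then 1 else 0 := by
    funext j
    by_cases hji : j = i <;> simp [hji]
  rw [hfun]

lemma shift_fixed_eval (i : Fin n) (f : MvPolynomial (Fin n) ℂ)
    (h : shiftOp n 1 i f = f) (x : Fin n → ℂ) :
    eval x f = eval (Function.update x i 0) f := by
  set q : Polynomial ℂ :=
    aeval (fun j => if j = i then Polynomial.X else Polynomial.C (x j)) f with hq
  have hqe : ∀ t, Polynomial.eval t q = eval (Function.update x i t) f := by
    intro t
    rw [hq, eval_aeval_poly]
    have hfun : (fun j => Polynomial.eval t (if j = i then Polynomial.X else Polynomial.C (x j)))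
        = Function.update x i t := by
      funext j
      by_cases hji : j = i
      · subst hji; simp [Function.update_self]
      · simp [hji, Function.update_of_ne hji]
    rw [hfun]
  have hstep : ∀ t : ℂ, Polynomial.eval (t + 1) q = Polynomial.eval t q := by
    intro t
    rw [hqe, hqe]
    conv_rhs => rw [← h]
    rw [eval_shiftOp]
    have hfun : Function.update x i (t + 1)
        = fun j => Function.update x i t j + if j = i then 1 else 0 := by
      funext j
      by_cases hji : j = i
      · subst hji; simp [Function.update_self]
      · simp [Function.update_of_ne hji, hji]
    rw [hfun]
  have hnat : ∀ k : ℕ, Polynomial.eval ((k : ℂ)) q = Polynomial.eval 0 q := by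
    intro k
    induction k with
    | zero => norm_num
    | succ k ih =>
        push_cast
        rw [hstep, ih]
  have hconst : ∀ t : ℂ, Polynomial.eval t q = Polynomial.eval 0 q := by
    intro t
    have hz : q - Polynomial.C (Polynomial.eval 0 q) = 0 := by
      apply Polynomial.eq_zero_of_infinite_isRoot
      apply Set.infinite_of_injective_forall_mem (f := fun k : ℕ => (k : ℂ))
        Nat.cast_injective
      intro k
      simp only [Set.mem_setOf_eq, Polynomial.IsRoot, Polynomial.eval_sub,
        Polynomial.eval_C, hnat k, sub_self]
    have := congrArg (Polynomial.eval t) hz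
    simp only [Polynomial.eval_sub, Polynomial.eval_C, Polynomial.eval_zero] at this
    exact sub_eq_zero.mp this
  calc eval x f = Polynomial.eval (x i) q := by
        rw [hqe, Function.update_eq_self]
    _ = Polynomial.eval 0 q := hconst _
    _ = eval (Function.update x i 0) f := hqe 0

lemma eq_C_of_shift_fixed (f : MvPolynomial (Fin n) ℂ)
    (h : ∀ i, shiftOp n 1 i f = f) : f = C (eval (0 : Fin n → ℂ) f) := by
  have key : ∀ (s : Finset (Fin n)) (y : Fin n → ℂ), (∀ j, j ∉ s → y j = 0) →
      eval y f = eval (0 : Fin n → ℂ) f := by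
    intro s
    induction s using Finset.induction_on with
    | empty =>
        intro y hy
        have hy0 : y = 0 := funext fun j => hy j (Finset.notMem_empty j)
        rw [hy0]
    | @insert a s ha ih =>
        intro y hy
        rw [shift_fixed_eval a f (h a) y]
        refine ih _ ?_
        intro j hj
        by_cases hja : j = a
        · subst hja; simp [Function.update_self]
        · rw [Function.update_of_ne hja]
          exact hy j (by simp [Finset.mem_insert, hja, hj])
  apply MvPolynomial.funext
  intro x
  rw [eval_C]
  exact key Finset.univ x fun j hj => absurd (Finset.mem_univ j) hj

lemma eq_C_of_deg_zero (f : MvPolynomial (Fin n) ℂ) (h : totalDegree f = 0) :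
    f = C (coeff 0 f) := by
  apply MvPolynomial.ext
  intro m
  rw [coeff_C]
  split_ifs with hm
  · rw [hm]
  · by_contra hc
    rw [totalDegree_eq_zero_iff] at h
    exact hm ((Finsupp.ext fun x => h m (mem_support_iff.mpr hc) x).symm)

lemma const_mem (N : Submodule (Weyl n) (MvPolynomial (Fin n) ℂ)) (c : ℂ) (hc : c ≠ 0)
    (h : C c ∈ N) : (1 : MvPolynomial (Fin n) ℂ) ∈ N := by
  have hm := N.smul_mem (eta n (C c⁻¹)) h
  rwa [eta_smul, ← C_mul, inv_mul_cancel₀ hc, C_1] at hm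

lemma one_mem (N : Submodule (Weyl n) (MvPolynomial (Fin n) ℂ)) (D : ℕ) :
    ∀ f, f ∈ N → f ≠ 0 → totalDegree f ≤ D → (1 : MvPolynomial (Fin n) ℂ) ∈ N := by
  induction D with
  | zero =>
      intro f hfN hf0 hdeg
      have h0 : totalDegree f = 0 := Nat.le_zero.mp hdeg
      have hC := eq_C_of_deg_zero f h0
      have hc : coeff 0 f ≠ 0 := fun hcc => hf0 (by rw [hC, hcc, C_0])
      exact const_mem N _ hc (hC ▸ hfN)
  | succ D ih =>
      intro f hfN hf0 hdeg
      by_cases hS : ∀ i, shiftOp n 1 i f = f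
      · have hC := eq_C_of_shift_fixed f hS
        have hc : eval (0 : Fin n → ℂ) f ≠ 0 := fun hcc => hf0 (by rw [hC, hcc, C_0])
        exact const_mem N _ hc (hC ▸ hfN)
      · push_neg at hS
        obtain ⟨i, hi⟩ := hS
        have hgN : shiftOp n 1 i f - f ∈ N := by
          have hmem := N.smul_mem (dg n i + 1) hfN
          have heq : (dg n i + 1) • f = -(shiftOp n 1 i f - f) := by
            rw [add_smul, dg_smul, one_smul]; ring
          rw [heq] at hmem
          simpa using N.neg_mem hmem
        have hg0 : shiftOp n 1 i f - f ≠ 0 := sub_ne_zero.mpr hi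
        have hgd : totalDegree (shiftOp n 1 i f - f) ≤ D := by
          have := shift_sub_deg i f
          omega
        exact ih _ hgN hg0 hgd

lemma simple (n : ℕ) : IsSimpleModule (Weyl n) (MvPolynomial (Fin n) ℂ) := by
  haveI hnt : Nontrivial (Submodule (Weyl n) (MvPolynomial (Fin n) ℂ)) := by
    refine ⟨⊥, ⊤, fun h => ?_⟩
    have h1 : (1 : MvPolynomial (Fin n) ℂ) ∈ (⊥ : Submodule (Weyl n) _) :=
      h ▸ Submodule.mem_top
    exact one_ne_zero ((Submodule.mem_bot _).mp h1)
  refine { eq_bot_or_eq_top := fun N => ?_ }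
  by_cases hN : N = ⊥
  · left; exact hN
  · right
    obtain ⟨f, hfN, hf0⟩ := (Submodule.ne_bot_iff N).mp hN
    have h1 : (1 : MvPolynomial (Fin n) ℂ) ∈ N :=
      one_mem N (totalDegree f) f hfN hf0 le_rfl
    rw [Submodule.eq_top_iff']
    intro q
    have hm := N.smul_mem (eta n q) h1
    rwa [eta_smul, mul_one] at hm

noncomputable def isoQuot (n : ℕ) :
    (Weyl n ⧸ Isub n) ≃ₗ[Weyl n] MvPolynomial (Fin n) ℂ := by
  refine LinearEquiv.ofBijective (Submodule.liftQ (Isub n) (phi n) Isub_le_ker) ⟨?_, ?_⟩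
  · rw [← LinearMap.ker_eq_bot]
    exact Submodule.ker_liftQ_eq_bot _ _ _ ker_le_Isub
  · intro q
    exact ⟨Submodule.Quotient.mk (eta n q), by rw [Submodule.liftQ_apply]; exact phi_eta q⟩

end Statement14Aux

/-- `Ω = ℂ[d_1,…,d_n]` with `∂_i · f(d) = -f(d + e_i)` and
`x_i · f(d) = -f(d - e_i) d_i` is a simple module over the Weyl algebra `D_n`, isomorphic to
`D_n / Σ_{i=1}^n D_n (∂_i + 1)`. -/
theorem statement14 (n : ℕ) :
    IsSimpleModule (Weyl n) (MvPolynomial (Fin n) ℂ) ∧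
    Nonempty
      ((Weyl n ⧸ Submodule.span (Weyl n)
          {w : Weyl n | ∃ i : Fin n,
            w = RingQuot.mkAlgHom ℂ (WRel n) (FreeAlgebra.ι ℂ (WGen.d i)) + 1})
        ≃ₗ[Weyl n] MvPolynomial (Fin n) ℂ) := by
  exact ⟨Statement14Aux.simple n, ⟨Statement14Aux.isoQuot n⟩⟩
end

section
/- Let a_{n−1} = span{E_{ij} − E_{ii} : 1 ≤ i ≤ n−1, 1 ≤ j ≤ n} ⊂ gl_n. Then a_{n−1} is a Lie subalgebra of gl_n, and the linear map a_{n−1} → gl_{n−1} sending Ẽ_{ij} := E_{ij} − E_{in} ↦ E_{ij} for 1 ≤ i,j ≤ n−1 is a Lie algebra isomorphism. -/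
open Matrix

variable {m : ℕ}

noncomputable def gLin (m : ℕ) : Matrix (Fin m) (Fin m) ℂ →ₗ[ℂ] Matrix (Fin (m + 1)) (Fin (m + 1)) ℂ where
  toFun X := Matrix.of fun a b =>
    if ha : a = Fin.last m then 0
    else if hb : b = Fin.last m then -∑ j, X (a.castPred ha) j
    else X (a.castPred ha) (b.castPred hb)
  map_add' X Y := by
    ext a b
    simp only [Matrix.of_apply, Matrix.add_apply]
    split_ifs <;> simp [Finset.sum_add_distrib] <;> ring
  map_smul' c X := by
    ext a b
    simp only [Matrix.of_apply, Matrix.smul_apply, RingHom.id_apply, smul_eq_mul]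
    split_ifs <;> simp [Finset.mul_sum]

lemma gLin_apply_castSucc (X : Matrix (Fin m) (Fin m) ℂ) (a b : Fin m) :
    gLin m X a.castSucc b.castSucc = X a b := by
  simp [gLin, (Fin.castSucc_lt_last a).ne, (Fin.castSucc_lt_last b).ne]

lemma gLin_apply_last_row (X : Matrix (Fin m) (Fin m) ℂ) (b : Fin (m + 1)) :
    gLin m X (Fin.last m) b = 0 := by
  simp [gLin]

lemma gLin_apply_last_col (X : Matrix (Fin m) (Fin m) ℂ) (a : Fin m) :
    gLin m X a.castSucc (Fin.last m) = -∑ j, X a j := by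
  simp [gLin, (Fin.castSucc_lt_last a).ne]

lemma gLin_std (i j : Fin m) : gLin m (single i j 1) =
    single i.castSucc j.castSucc 1 - single i.castSucc (Fin.last m) 1 := by
  ext a b
  induction a using Fin.lastCases with
  | last =>
    simp [gLin_apply_last_row, Matrix.single, (Fin.castSucc_lt_last i).ne]
  | cast a =>
    induction b using Fin.lastCases with
    | last =>
      simp [gLin_apply_last_col, Matrix.single, Fin.castSucc_inj,
        (Fin.castSucc_lt_last j).ne, ite_and, Finset.sum_ite_eq]
    | cast b =>
      simp [gLin_apply_castSucc, Matrix.single, Fin.castSucc_inj,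
        (Fin.castSucc_lt_last b).ne.symm]

lemma gLin_mul (X Y : Matrix (Fin m) (Fin m) ℂ) :
    gLin m (X * Y) = gLin m X * gLin m Y := by
  ext a b
  rw [Matrix.mul_apply, Fin.sum_univ_castSucc]
  induction a using Fin.lastCases with
  | last => simp [gLin_apply_last_row]
  | cast a =>
    induction b using Fin.lastCases with
    | last =>
      simp only [gLin_apply_last_col, gLin_apply_castSucc, gLin_apply_last_row, mul_zero,
        add_zero, Matrix.mul_apply, Finset.mul_sum, ← Finset.sum_neg_distrib]
      rw [Finset.sum_comm]
      simp [Finset.mul_sum]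
    | cast b =>
      simp [gLin_apply_castSucc, gLin_apply_last_row, Matrix.mul_apply]

lemma gLin_inj : Function.Injective (gLin m) := by
  rw [injective_iff_map_eq_zero]
  intro X hX
  ext a b
  have := congrFun (congrFun hX a.castSucc) b.castSucc
  rwa [gLin_apply_castSucc] at this

lemma gLin_range :
    LinearMap.range (gLin m) = Submodule.span ℂ
      {A : Matrix (Fin (m + 1)) (Fin (m + 1)) ℂ | ∃ (i : Fin m) (j : Fin (m + 1)),
        A = single i.castSucc j 1 - single i.castSucc i.castSucc 1} := by
  apply le_antisymm
  · rintro _ ⟨X, rfl⟩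
    have hstd : ∀ i j : Fin m, single i j (X i j) = X i j • single i j 1 := by
      intro i j; rw [Matrix.smul_single, smul_eq_mul, mul_one]
    have hX : gLin m X = ∑ i, ∑ j, X i j • gLin m (single i j 1) := by
      conv_lhs => rw [Matrix.matrix_eq_sum_single X]
      rw [map_sum]
      refine Finset.sum_congr rfl fun i _ => ?_
      rw [map_sum]
      refine Finset.sum_congr rfl fun j _ => ?_
      rw [hstd, _root_.map_smul]
    rw [hX]
    apply Submodule.sum_mem; intro i _; apply Submodule.sum_mem; intro j _
    apply Submodule.smul_mem
    rw [gLin_std]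
    have h1 : (single i.castSucc j.castSucc 1 -
        single i.castSucc i.castSucc 1 : Matrix (Fin (m+1)) (Fin (m+1)) ℂ)
        ∈ Submodule.span ℂ {A : Matrix (Fin (m + 1)) (Fin (m + 1)) ℂ | ∃ (i : Fin m) (j : Fin (m + 1)),
          A = single i.castSucc j 1 - single i.castSucc i.castSucc 1} :=
      Submodule.subset_span ⟨i, j.castSucc, rfl⟩
    have h2 : (single i.castSucc (Fin.last m) 1 -
        single i.castSucc i.castSucc 1 : Matrix (Fin (m+1)) (Fin (m+1)) ℂ)
        ∈ Submodule.span ℂ {A : Matrix (Fin (m + 1)) (Fin (m + 1)) ℂ | ∃ (i : Fin m) (j : Fin (m + 1)),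
          A = single i.castSucc j 1 - single i.castSucc i.castSucc 1} :=
      Submodule.subset_span ⟨i, Fin.last m, rfl⟩
    have := Submodule.sub_mem _ h1 h2
    convert this using 1
    abel
  · rw [Submodule.span_le]
    rintro _ ⟨i, j, rfl⟩
    induction j using Fin.lastCases with
    | last =>
      refine ⟨-(single i i 1), ?_⟩
      rw [map_neg, gLin_std]
      abel
    | cast j =>
      refine ⟨single i j 1 - single i i 1, ?_⟩
      rw [map_sub, gLin_std, gLin_std]
      abel

/-- With `n = m + 1`, the subspace
`a_{n-1} = span{E_{ij} - E_{ii} : 1 ≤ i ≤ n-1, 1 ≤ j ≤ n} ⊂ gl_n` is a Lie subalgebra, and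
the linear map `gl_{n-1} → a_{n-1}` determined by `E_{ij} ↦ Ẽ_{ij} = E_{ij} - E_{in}` is a
Lie algebra isomorphism onto `a_{n-1}`. -/
theorem statement15 (m : ℕ) :
    (∀ x ∈ Submodule.span ℂ
        {A : Matrix (Fin (m + 1)) (Fin (m + 1)) ℂ | ∃ (i : Fin m) (j : Fin (m + 1)),
          A = single i.castSucc j 1 - single i.castSucc i.castSucc 1},
      ∀ y ∈ Submodule.span ℂ
        {A : Matrix (Fin (m + 1)) (Fin (m + 1)) ℂ | ∃ (i : Fin m) (j : Fin (m + 1)),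
          A = single i.castSucc j 1 - single i.castSucc i.castSucc 1},
      ⁅x, y⁆ ∈ Submodule.span ℂ
        {A : Matrix (Fin (m + 1)) (Fin (m + 1)) ℂ | ∃ (i : Fin m) (j : Fin (m + 1)),
          A = single i.castSucc j 1 - single i.castSucc i.castSucc 1}) ∧
    ∃ g : Matrix (Fin m) (Fin m) ℂ →ₗ[ℂ] Matrix (Fin (m + 1)) (Fin (m + 1)) ℂ,
      (∀ i j : Fin m, g (single i j 1) =
        single i.castSucc j.castSucc 1 - single i.castSucc (Fin.last m) 1) ∧
      Function.Injective g ∧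
      LinearMap.range g = Submodule.span ℂ
        {A : Matrix (Fin (m + 1)) (Fin (m + 1)) ℂ | ∃ (i : Fin m) (j : Fin (m + 1)),
          A = single i.castSucc j 1 - single i.castSucc i.castSucc 1} ∧
      ∀ x y : Matrix (Fin m) (Fin m) ℂ, g ⁅x, y⁆ = ⁅g x, g y⁆ := by
  have hbrk : ∀ x y : Matrix (Fin m) (Fin m) ℂ, gLin m ⁅x, y⁆ = ⁅gLin m x, gLin m y⁆ := by
    intro x y
    rw [Ring.lie_def, Ring.lie_def, map_sub, gLin_mul, gLin_mul]
  constructor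
  · intro x hx y hy
    rw [← gLin_range] at hx hy ⊢
    obtain ⟨X, rfl⟩ := hx
    obtain ⟨Y, rfl⟩ := hy
    exact ⟨⁅X, Y⁆, hbrk X Y⟩
  · exact ⟨gLin m, gLin_std, gLin_inj, gLin_range, hbrk⟩
end
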